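/- arXiv:1010.5079 — 5 statements merged into one kernel-verified Lean document; each statement's English description precedes it below -/
import Mathlib

section
/- Let k and n be natural numbers and ε a real number with 0 < ε ≤ 1/(k+3) and n > 3/ε². If H is a graph on at least n + (k+2)εn vertices whose complement contains no cycle of length at least ε²n, then H contains a copy of P_n^k, the k-th power of a path on n vertices. -/
open SimpleGraph Finset

/-- `Embeds H G`: there is a copy of `H` in `G` (injective edge-preserving map). -/
def Embeds {α β : Type*} (H : SimpleGraph α) (G : SimpleGraph β) : Prop :=
  ∃ f : α → β, Function.Injective f ∧ ∀ u v, H.Adj u v → G.Adj (f u) (f v)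

/-- `HomTo H G`: there is a graph homomorphism from `H` to `G`. -/
def HomTo {α β : Type*} (H : SimpleGraph α) (G : SimpleGraph β) : Prop :=
  ∃ f : α → β, ∀ u v, H.Adj u v → G.Adj (f u) (f v)

/-- Every red/blue colouring (given by its red graph `R`) of `K_N`
contains a red copy of `G` or a blue copy of `H`. -/
def RamseyProp {α β : Type*} (G : SimpleGraph α) (H : SimpleGraph β) (N : ℕ) : Prop :=
  ∀ R : SimpleGraph (Fin N), Embeds G R ∨ Embeds H Rᶜ

/-- The Ramsey number `R(G,H)`. -/
noncomputable def ramseyNumber {α β : Type*} (G : SimpleGraph α) (H : SimpleGraph β) : ℕ :=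
  sInf {N | RamseyProp G H N}

/-- `σ(H)`: the minimum size of a colour class in a proper colouring of `H`
with exactly `χ(H)` colours. -/
noncomputable def sigmaH {V : Type*} [Fintype V] (H : SimpleGraph V) : ℕ :=
  sInf { s | ∃ C : H.Coloring (Fin H.chromaticNumber.toNat), ∃ i,
      s = Nat.card {v // C v = i} }

/-- The `k`-th power of the path on `n` vertices. -/
def pathPower (n k : ℕ) : SimpleGraph (Fin n) where
  Adj i j := i ≠ j ∧ Nat.dist i.val j.val ≤ k
  symm := by
    constructor
    intro i j h
    exact ⟨Ne.symm h.1, by rw [Nat.dist_comm]; exact h.2⟩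
  loopless := by
    constructor
    intro i h
    exact h.1 rfl

/-- The `k`-th power of the cycle on `n` vertices. -/
def cyclePower (n k : ℕ) : SimpleGraph (Fin n) where
  Adj i j := i ≠ j ∧ min (Nat.dist i.val j.val) (n - Nat.dist i.val j.val) ≤ k
  symm := by
    constructor
    intro i j h
    refine ⟨Ne.symm h.1, ?_⟩
    rw [Nat.dist_comm]
    exact h.2
  loopless := by
    constructor
    intro i h
    exact h.1 rfl

open SimpleGraph Finset

section Forest
variable {V : Type} (G : SimpleGraph V)

/-- Reachability within a finset `S`. -/
def Reach (S : Finset V) (u v : V) : Prop :=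
  ∃ p : G.Walk u v, ∀ x ∈ p.support, x ∈ S

variable {G}

lemma Reach.mem_left {S : Finset V} {u v : V} (h : Reach G S u v) : u ∈ S := by
  obtain ⟨p, hp⟩ := h; exact hp _ p.start_mem_support

lemma Reach.mem_right {S : Finset V} {u v : V} (h : Reach G S u v) : v ∈ S := by
  obtain ⟨p, hp⟩ := h; exact hp _ p.end_mem_support

lemma Reach.refl {S : Finset V} {u : V} (h : u ∈ S) : Reach G S u u :=
  ⟨Walk.nil, by simp [h]⟩

lemma Reach.symm {S : Finset V} {u v : V} (h : Reach G S u v) : Reach G S v u := by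
  obtain ⟨p, hp⟩ := h
  exact ⟨p.reverse, by intro x hx; rw [Walk.support_reverse] at hx; exact hp x (List.mem_reverse.1 hx)⟩

lemma Reach.trans {S : Finset V} {u v w : V} (h : Reach G S u v) (h' : Reach G S v w) :
    Reach G S u w := by
  obtain ⟨p, hp⟩ := h; obtain ⟨q, hq⟩ := h'
  refine ⟨p.append q, ?_⟩
  intro x hx
  rw [Walk.support_append] at hx
  rcases List.mem_append.1 hx with hx | hx
  · exact hp x hx
  · exact hq x (List.mem_of_mem_tail hx)

lemma Reach.adj {S : Finset V} {u v w : V} (h : Reach G S u v) (hadj : G.Adj v w) (hw : w ∈ S) :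
    Reach G S u w :=
  h.trans ⟨Walk.cons hadj Walk.nil, by
    intro x hx
    simp only [Walk.support_cons, Walk.support_nil, List.mem_cons, List.mem_singleton,
      List.not_mem_nil, or_false] at hx
    rcases hx with rfl | rfl
    · exact h.mem_right
    · exact hw⟩

lemma Reach.mono {S S' : Finset V} {u v : V} (hS : S ⊆ S') (h : Reach G S u v) :
    Reach G S' u v := by
  obtain ⟨p, hp⟩ := h; exact ⟨p, fun x hx => hS (hp x hx)⟩

/-- From a walk within `S` leaving `r`, extract a neighbour `y` of `r` and a walk from `y`
avoiding `r` (the part after the last visit of `r`). -/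
lemma lastExit [DecidableEq V] {S : Finset V} {r w : V} (hw : w ≠ r) :
    ∀ (p : G.Walk r w), (∀ x ∈ p.support, x ∈ S) →
      ∃ y, G.Adj r y ∧ Reach G (S.erase r) y w := by
  intro p
  generalize hn : p.length = N
  induction N using Nat.strong_induction_on generalizing r p with
  | _ N ih =>
  subst hn
  intro hp
  cases p with
  | nil => exact absurd rfl hw
  | @cons _ y _ h q =>
    by_cases hr : r ∈ q.support
    · have hlen : (q.dropUntil r hr).length < (Walk.cons h q).length := by
        have := q.length_dropUntil_le hr
        simp only [Walk.length_cons]; omega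
      exact ih _ hlen hw (q.dropUntil r hr) rfl
        (fun x hx => hp x (by
          simp only [Walk.support_cons, List.mem_cons]
          exact Or.inr (q.support_dropUntil_subset hr hx)))
    · refine ⟨y, h, q, ?_⟩
      intro x hx
      refine Finset.mem_erase.2 ⟨?_, hp x (by
        simp only [Walk.support_cons, List.mem_cons]; exact Or.inr hx)⟩
      rintro rfl; exact hr hx

/-- If `C` is closed under `S.erase r`-reachability and `v ∉ C`, a walk from `r` to `v` in `S`
can be rerouted to avoid `C`. -/
lemma avoidComponent [DecidableEq V] {S : Finset V} {r : V} {C : Finset V}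
    (hrC : r ∉ C)
    (hclosed : ∀ x v : V, x ∈ C → Reach G (S.erase r) x v → v ∈ C) :
    ∀ {v : V} (p : G.Walk r v), v ∉ C → (∀ x ∈ p.support, x ∈ S) →
      Reach G (S \ C) r v := by
  intro v p
  generalize hn : p.length = N
  induction N using Nat.strong_induction_on generalizing p with
  | _ N ih =>
  subst hn
  intro hv hp
  cases p with
  | nil => exact ⟨Walk.nil, by simp [Finset.mem_sdiff, hp r (by simp), hrC]⟩
  | @cons _ y _ h q =>
    by_cases hr : r ∈ q.support
    · have hlen : (q.dropUntil r hr).length < (Walk.cons h q).length := by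
        have := q.length_dropUntil_le hr
        simp only [Walk.length_cons]; omega
      exact ih _ hlen (q.dropUntil r hr) rfl hv
        (fun x hx => hp x (by
          simp only [Walk.support_cons, List.mem_cons]
          exact Or.inr (q.support_dropUntil_subset hr hx)))
    · -- r does not reappear; the whole walk avoids C
      have hq_sub : ∀ x ∈ q.support, x ∈ S.erase r := by
        intro x hx
        refine Finset.mem_erase.2 ⟨?_, hp x (by
          simp only [Walk.support_cons, List.mem_cons]; exact Or.inr hx)⟩
        rintro rfl; exact hr hx
      have hqC : ∀ x ∈ q.support, x ∉ C := by
        intro x hx hxC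
        have hreach : Reach G (S.erase r) x v := by
          refine ⟨q.dropUntil x hx, fun z hz => hq_sub z (q.support_dropUntil_subset hx hz)⟩
        exact hv (hclosed x v hxC hreach)
      refine ⟨Walk.cons h q, ?_⟩
      intro x hx
      simp only [Walk.support_cons, List.mem_cons] at hx
      rcases hx with rfl | hx
      · exact Finset.mem_sdiff.2 ⟨hp x (by simp), hrC⟩
      · exact Finset.mem_sdiff.2 ⟨hp x (by
          simp only [Walk.support_cons, List.mem_cons]; exact Or.inr hx), hqC x hx⟩

end Forest

section ForestDefs
variable {V : Type} (G : SimpleGraph V)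

/-- A normal (Trémaux) forest structure on `S`: depth function `d` and ancestor function
`anc` such that every edge of `G` inside `S` joins an ancestor–descendant pair. -/
structure NF (S : Finset V) (d : V → ℕ) (anc : V → ℕ → V) : Prop where
  mem : ∀ v ∈ S, ∀ j, j ≤ d v → anc v j ∈ S
  depth : ∀ v ∈ S, ∀ j, j ≤ d v → d (anc v j) = j
  self : ∀ v ∈ S, anc v (d v) = v
  adj : ∀ v ∈ S, ∀ j, j < d v → G.Adj (anc v (j+1)) (anc v j)
  comp : ∀ v ∈ S, ∀ i j, j ≤ i → i ≤ d v → anc (anc v i) j = anc v j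
  norm : ∀ u v, u ∈ S → v ∈ S → G.Adj u v → d u ≠ d v ∧ (d u < d v → anc v (d u) = u)

/-- A normal tree rooted at `r`. -/
structure NT (S : Finset V) (r : V) (d : V → ℕ) (anc : V → ℕ → V)
    extends NF G S d anc : Prop where
  root : d r = 0
  anc0 : ∀ v ∈ S, anc v 0 = r

end ForestDefs

section ForestBuild
variable {V : Type} [DecidableEq V] {G : SimpleGraph V}

lemma glt (G : SimpleGraph V) :
    ∀ (m : ℕ) (S : Finset V) (r : V), S.card ≤ m → r ∈ S →
      (∀ v ∈ S, Reach G S r v) → ∃ d anc, NT G S r d anc := by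
  intro m
  induction m with
  | zero =>
    intro S r hcard hr _
    exact absurd (Finset.card_pos.2 ⟨r, hr⟩) (by omega)
  | succ m ih =>
    intro S r hcard hr hreach
    classical
    by_cases hS' : S.erase r = ∅
    · -- S = {r}
      have hSr : ∀ v ∈ S, v = r := by
        intro v hv
        by_contra hne
        exact (Finset.eq_empty_iff_forall_notMem.1 hS' v) (Finset.mem_erase.2 ⟨hne, hv⟩)
      refine ⟨fun _ => 0, fun _ _ => r, ?_, rfl, fun v _ => rfl⟩
      refine ⟨?_, ?_, ?_, ?_, ?_, ?_⟩
      · intro v hv j hj; simpa using hr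
      · intro v hv j hj; omega
      · intro v hv; exact (hSr v hv).symm
      · intro v hv j hj; omega
      · intro v hv i j hji hid; rfl
      · intro u v hu hv hadj
        rw [hSr u hu, hSr v hv] at hadj
        exact absurd hadj (G.loopless.irrefl r)
    · obtain ⟨w, hw⟩ := Finset.nonempty_of_ne_empty hS'
      have hwns : w ≠ r := (Finset.mem_erase.1 hw).1
      have hwS : w ∈ S := (Finset.mem_erase.1 hw).2
      obtain ⟨p, hp⟩ := hreach w hwS
      obtain ⟨y, hry, hyw⟩ := lastExit hwns p hp
      set S' := S.erase r with hS'def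
      set C : Finset V := S'.filter (fun x => Reach G S' w x) with hCdef
      have hCsub : C ⊆ S' := Finset.filter_subset _ _
      have hCS : C ⊆ S := hCsub.trans (Finset.erase_subset _ _)
      have hmemC : ∀ x, x ∈ C ↔ (x ∈ S' ∧ Reach G S' w x) := by
        intro x; simp [hCdef]
      have hwC : w ∈ C := (hmemC w).2 ⟨hw, Reach.refl hw⟩
      have hyC : y ∈ C := (hmemC y).2 ⟨hyw.mem_left, hyw.symm⟩
      have hrC : r ∉ C := fun h => (Finset.mem_erase.1 (hCsub h)).1 rfl
      have hclosed : ∀ x v : V, x ∈ C → Reach G S' x v → v ∈ C := by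
        intro x v hx hxv
        exact (hmemC v).2 ⟨hxv.mem_right, ((hmemC x).1 hx).2.trans hxv⟩
      -- recursive call on C with root y
      have hcardC : C.card ≤ m := by
        have h1 : C.card ≤ S'.card := Finset.card_le_card hCsub
        have h2 : S'.card = S.card - 1 := Finset.card_erase_of_mem hr
        omega
      have hreachC : ∀ v ∈ C, Reach G C y v := by
        intro v hv
        have h1 : Reach G S' y v := hyw.trans ((hmemC v).1 hv).2
        obtain ⟨q, hq⟩ := h1
        refine ⟨q, ?_⟩
        intro z hz
        refine (hmemC z).2 ⟨hq z hz, ?_⟩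
        refine hyw.symm.trans ⟨q.takeUntil z hz, ?_⟩
        intro a ha
        exact hq a (q.support_takeUntil_subset hz ha)
      obtain ⟨d₁, anc₁, t₁⟩ := ih C y hcardC hyC hreachC
      -- recursive call on S \ C with root r
      have hrSC : r ∈ S \ C := Finset.mem_sdiff.2 ⟨hr, hrC⟩
      have hcardSC : (S \ C).card ≤ m := by
        have h1 : (S \ C).card = S.card - C.card := Finset.card_sdiff_of_subset hCS
        have h2 : 1 ≤ C.card := Finset.card_pos.2 ⟨w, hwC⟩
        omega
      have hreachSC : ∀ v ∈ S \ C, Reach G (S \ C) r v := by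
        intro v hv
        obtain ⟨p', hp'⟩ := hreach v (Finset.mem_sdiff.1 hv).1
        exact avoidComponent hrC hclosed p' (Finset.mem_sdiff.1 hv).2 hp'
      obtain ⟨d₂, anc₂, t₂⟩ := ih (S \ C) r hcardSC hrSC hreachSC
      -- combine
      set d' : V → ℕ := fun v => if v ∈ C then d₁ v + 1 else d₂ v with hd'
      set anc' : V → ℕ → V :=
        fun v j => if v ∈ C then (if j = 0 then r else anc₁ v (j-1)) else anc₂ v j with hanc'
      have hdC : ∀ v ∈ C, d' v = d₁ v + 1 := fun v hv => by simp [hd', hv]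
      have hdN : ∀ v, v ∉ C → d' v = d₂ v := fun v hv => by simp [hd', hv]
      have haC0 : ∀ v ∈ C, anc' v 0 = r := fun v hv => by simp [hanc', hv]
      have haCS : ∀ v ∈ C, ∀ j, anc' v (j+1) = anc₁ v j := fun v hv j => by simp [hanc', hv]
      have haN : ∀ v, v ∉ C → ∀ j, anc' v j = anc₂ v j := fun v hv j => by simp [hanc', hv]
      have hedge : ∀ u v, u ∈ C → v ∈ S → G.Adj u v → v ∈ C ∨ v = r := by
        intro u v hu hv hadj
        by_cases hvr : v = r
        · exact Or.inr hvr
        · exact Or.inl (hclosed u v hu (Reach.adj (Reach.refl (hCsub hu)) hadj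
            (Finset.mem_erase.2 ⟨hvr, hv⟩)))
      refine ⟨d', anc', ⟨?_, ?_, ?_, ?_, ?_, ?_⟩, ?_, ?_⟩
      · -- mem
        intro v hv j hj
        by_cases hvC : v ∈ C
        · rw [hdC v hvC] at hj
          cases j with
          | zero => rw [haC0 v hvC]; exact hr
          | succ j' =>
            rw [haCS v hvC j']
            exact hCS (t₁.mem v hvC j' (by omega))
        · rw [hdN v hvC] at hj
          rw [haN v hvC j]
          exact (Finset.mem_sdiff.1 (t₂.mem v (Finset.mem_sdiff.2 ⟨hv, hvC⟩) j hj)).1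
      · -- depth
        intro v hv j hj
        by_cases hvC : v ∈ C
        · rw [hdC v hvC] at hj
          cases j with
          | zero =>
            rw [haC0 v hvC, hdN r hrC]
            exact t₂.root
          | succ j' =>
            rw [haCS v hvC j']
            have hm := t₁.mem v hvC j' (by omega)
            rw [hdC _ hm, t₁.depth v hvC j' (by omega)]
        · rw [hdN v hvC] at hj
          rw [haN v hvC j]
          have hm := t₂.mem v (Finset.mem_sdiff.2 ⟨hv, hvC⟩) j hj
          rw [hdN _ (Finset.mem_sdiff.1 hm).2]
          exact t₂.depth v (Finset.mem_sdiff.2 ⟨hv, hvC⟩) j hj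
      · -- self
        intro v hv
        by_cases hvC : v ∈ C
        · rw [hdC v hvC, haCS v hvC]
          exact t₁.self v hvC
        · rw [hdN v hvC, haN v hvC]
          exact t₂.self v (Finset.mem_sdiff.2 ⟨hv, hvC⟩)
      · -- adj
        intro v hv j hj
        by_cases hvC : v ∈ C
        · rw [hdC v hvC] at hj
          cases j with
          | zero =>
            rw [haC0 v hvC, haCS v hvC 0, t₁.anc0 v hvC]
            exact hry.symm
          | succ j' =>
            rw [haCS v hvC, haCS v hvC]
            exact t₁.adj v hvC j' (by omega)
        · rw [hdN v hvC] at hj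
          rw [haN v hvC, haN v hvC]
          exact t₂.adj v (Finset.mem_sdiff.2 ⟨hv, hvC⟩) j hj
      · -- comp
        intro v hv i j hji hid
        by_cases hvC : v ∈ C
        · rw [hdC v hvC] at hid
          cases i with
          | zero =>
            have hj0 : j = 0 := by omega
            subst hj0
            rw [haC0 v hvC, haN r hrC 0]
            exact t₂.anc0 r hrSC
          | succ i' =>
            rw [haCS v hvC i']
            have ha : anc₁ v i' ∈ C := t₁.mem v hvC i' (by omega)
            cases j with
            | zero => rw [haC0 _ ha, haC0 v hvC]
            | succ j' =>
              rw [haCS _ ha, haCS v hvC]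
              exact t₁.comp v hvC i' j' (by omega) (by omega)
        · rw [hdN v hvC] at hid
          rw [haN v hvC i]
          have ha := t₂.mem v (Finset.mem_sdiff.2 ⟨hv, hvC⟩) i hid
          rw [haN _ (Finset.mem_sdiff.1 ha).2, haN v hvC]
          exact t₂.comp v (Finset.mem_sdiff.2 ⟨hv, hvC⟩) i j hji hid
      · -- norm
        intro u v hu hv hadj
        by_cases huC : u ∈ C <;> by_cases hvC : v ∈ C
        · have hn := t₁.norm u v huC hvC hadj
          rw [hdC u huC, hdC v hvC]
          refine ⟨by omega, fun hlt => ?_⟩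
          have : d₁ u + 1 = d₁ u + 1 := rfl
          rw [haCS v hvC]
          exact hn.2 (by omega)
        · have hvr : v = r := by
            rcases hedge u v huC hv hadj with h | h
            · exact absurd h hvC
            · exact h
          subst hvr
          rw [hdC u huC, hdN _ hvC, t₂.root]
          exact ⟨by omega, by omega⟩
        · have hur : u = r := by
            rcases hedge v u hvC hu hadj.symm with h | h
            · exact absurd h huC
            · exact h
          subst hur
          rw [hdN u huC, hdC v hvC, t₂.root]
          refine ⟨by omega, fun _ => ?_⟩
          exact haC0 v hvC
        · rw [hdN u huC, hdN v hvC, haN v hvC]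
          exact t₂.norm u v (Finset.mem_sdiff.2 ⟨hu, huC⟩) (Finset.mem_sdiff.2 ⟨hv, hvC⟩) hadj
      · -- root
        rw [hdN r hrC]
        exact t₂.root
      · -- anc0
        intro v hv
        by_cases hvC : v ∈ C
        · exact haC0 v hvC
        · rw [haN v hvC]
          exact t₂.anc0 v (Finset.mem_sdiff.2 ⟨hv, hvC⟩)

lemma glf (G : SimpleGraph V) :
    ∀ (m : ℕ) (S : Finset V), S.card ≤ m → ∃ d anc, NF G S d anc := by
  intro m
  induction m with
  | zero =>
    intro S hcard
    have hS : S = ∅ := Finset.card_eq_zero.1 (by omega)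
    subst hS
    exact ⟨fun _ => 0, fun v _ => v,
      ⟨fun v hv => absurd hv (Finset.notMem_empty v), fun v hv => absurd hv (Finset.notMem_empty v),
       fun v hv => absurd hv (Finset.notMem_empty v), fun v hv => absurd hv (Finset.notMem_empty v),
       fun v hv => absurd hv (Finset.notMem_empty v),
       fun u v hu => absurd hu (Finset.notMem_empty u)⟩⟩
  | succ m ih =>
    intro S hcard
    classical
    rcases Finset.eq_empty_or_nonempty S with rfl | ⟨w, hw⟩
    · exact ih ∅ (by simp)
    · set C : Finset V := S.filter (fun x => Reach G S w x) with hCdef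
      have hmemC : ∀ x, x ∈ C ↔ (x ∈ S ∧ Reach G S w x) := by intro x; simp [hCdef]
      have hCS : C ⊆ S := Finset.filter_subset _ _
      have hwC : w ∈ C := (hmemC w).2 ⟨hw, Reach.refl hw⟩
      have hreachC : ∀ v ∈ C, Reach G C w v := by
        intro v hv
        obtain ⟨q, hq⟩ := ((hmemC v).1 hv).2
        refine ⟨q, ?_⟩
        intro z hz
        refine (hmemC z).2 ⟨hq z hz, ⟨q.takeUntil z hz, ?_⟩⟩
        intro a ha
        exact hq a (q.support_takeUntil_subset hz ha)
      obtain ⟨d₁, anc₁, t₁⟩ := glt G C.card C w le_rfl hwC hreachC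
      have hcardSC : (S \ C).card ≤ m := by
        have h1 : (S \ C).card = S.card - C.card := Finset.card_sdiff_of_subset hCS
        have h2 : 1 ≤ C.card := Finset.card_pos.2 ⟨w, hwC⟩
        omega
      obtain ⟨d₂, anc₂, t₂⟩ := ih (S \ C) hcardSC
      have hedge : ∀ u v, u ∈ C → v ∈ S → G.Adj u v → v ∈ C := by
        intro u v hu hv hadj
        exact (hmemC v).2 ⟨hv, ((hmemC u).1 hu).2.adj hadj hv⟩
      refine ⟨fun v => if v ∈ C then d₁ v else d₂ v,
        fun v j => if v ∈ C then anc₁ v j else anc₂ v j, ?_, ?_, ?_, ?_, ?_, ?_⟩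
      · intro v hv j hj
        by_cases hvC : v ∈ C
        · simp only [hvC, if_true] at hj ⊢
          exact hCS (t₁.mem v hvC j hj)
        · simp only [hvC, if_false] at hj ⊢
          exact (Finset.mem_sdiff.1 (t₂.mem v (Finset.mem_sdiff.2 ⟨hv, hvC⟩) j hj)).1
      · intro v hv j hj
        by_cases hvC : v ∈ C
        · simp only [hvC, if_true] at hj ⊢
          rw [if_pos (t₁.mem v hvC j hj)]
          exact t₁.depth v hvC j hj
        · simp only [hvC, if_false] at hj ⊢
          rw [if_neg (Finset.mem_sdiff.1 (t₂.mem v (Finset.mem_sdiff.2 ⟨hv, hvC⟩) j hj)).2]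
          exact t₂.depth v (Finset.mem_sdiff.2 ⟨hv, hvC⟩) j hj
      · intro v hv
        by_cases hvC : v ∈ C
        · simp only [hvC, if_true]; exact t₁.self v hvC
        · simp only [hvC, if_false]; exact t₂.self v (Finset.mem_sdiff.2 ⟨hv, hvC⟩)
      · intro v hv j hj
        by_cases hvC : v ∈ C
        · simp only [hvC, if_true] at hj ⊢; exact t₁.adj v hvC j hj
        · simp only [hvC, if_false] at hj ⊢; exact t₂.adj v (Finset.mem_sdiff.2 ⟨hv, hvC⟩) j hj
      · intro v hv i j hji hid
        by_cases hvC : v ∈ C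
        · simp only [hvC, if_true] at hid ⊢
          rw [if_pos (t₁.mem v hvC i hid)]
          exact t₁.comp v hvC i j hji hid
        · simp only [hvC, if_false] at hid ⊢
          rw [if_neg (Finset.mem_sdiff.1 (t₂.mem v (Finset.mem_sdiff.2 ⟨hv, hvC⟩) i hid)).2]
          exact t₂.comp v (Finset.mem_sdiff.2 ⟨hv, hvC⟩) i j hji hid
      · intro u v hu hv hadj
        by_cases huC : u ∈ C <;> by_cases hvC : v ∈ C
        · simp only [huC, hvC, if_true]
          exact t₁.norm u v huC hvC hadj
        · exact absurd (hedge u v huC hv hadj) hvC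
        · exact absurd (hedge v u hvC hu hadj.symm) huC
        · simp only [huC, hvC, if_false]
          exact t₂.norm u v (Finset.mem_sdiff.2 ⟨hu, huC⟩) (Finset.mem_sdiff.2 ⟨hv, hvC⟩) hadj

end ForestBuild

section Descend
variable {V : Type} {G : SimpleGraph V} {d : V → ℕ} {anc : V → ℕ → V}

variable [Fintype V]

lemma descend (hnf : NF G Finset.univ d anc) :
    ∀ (D : ℕ) (v : V) (j : ℕ), j + D = d v →
      ∃ p : G.Walk v (anc v j), p.length = D ∧
        p.support = (List.range (D+1)).map (fun t => anc v (d v - t)) ∧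
        p.edges = (List.range D).map (fun t => s(anc v (d v - t), anc v (d v - (t+1)))) := by
  intro D
  induction D with
  | zero =>
    intro v j hj
    have hjd : j = d v := by omega
    subst hjd
    have hs : anc v (d v) = v := hnf.self v (Finset.mem_univ v)
    refine ⟨(Walk.nil : G.Walk v v).copy rfl hs.symm, ?_, ?_, ?_⟩
    · simp
    · rw [Walk.support_copy, Walk.support_nil, show List.range 1 = [0] from rfl]
      simp [hs]
    · simp
  | succ D ihD =>
    intro v j hj
    have hdv : 0 < d v := by omega
    have hadj : G.Adj v (anc v (d v - 1)) := by
      have := hnf.adj v (Finset.mem_univ v) (d v - 1) (by omega)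
      rwa [show d v - 1 + 1 = d v by omega, hnf.self v (Finset.mem_univ v)] at this
    have hdu : d (anc v (d v - 1)) = d v - 1 :=
      hnf.depth v (Finset.mem_univ v) (d v - 1) (by omega)
    obtain ⟨q, hql, hqs, hqe⟩ := ihD (anc v (d v - 1)) j (by omega)
    have hancj : anc (anc v (d v - 1)) j = anc v j :=
      hnf.comp v (Finset.mem_univ v) (d v - 1) j (by omega) (by omega)
    have hcomp' : ∀ t : ℕ, anc (anc v (d v - 1)) (d (anc v (d v - 1)) - t) = anc v (d v - (t+1)) := by
      intro t
      rw [hdu, show d v - 1 - t = d v - (t+1) by omega]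
      exact hnf.comp v (Finset.mem_univ v) (d v - 1) (d v - (t+1)) (by omega) (by omega)
    refine ⟨Walk.cons hadj (q.copy rfl hancj), ?_, ?_, ?_⟩
    · simp [hql]
    · rw [Walk.support_cons, Walk.support_copy, hqs,
        List.range_succ_eq_map (n := D+1), List.map_cons, List.map_map]
      congr 1
      · rw [Nat.sub_zero, hnf.self v (Finset.mem_univ v)]
      · refine List.map_congr_left ?_
        intro t _
        simp only [Function.comp_apply, Nat.succ_eq_add_one]
        exact hcomp' t
    · rw [Walk.edges_cons, Walk.edges_copy, hqe,
        List.range_succ_eq_map (n := D), List.map_cons, List.map_map]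
      congr 1
      · rw [Nat.sub_zero, hnf.self v (Finset.mem_univ v)]
      · refine List.map_congr_left ?_
        intro t _
        simp only [Function.comp_apply, Nat.succ_eq_add_one]
        rw [hcomp' t, hcomp' (t+1)]
    
lemma adj_cycle (hnf : NF G Finset.univ d anc) {u v : V}
    (h : G.Adj u v) (h2 : d u + 2 ≤ d v) :
    ∃ w : G.Walk u u, w.IsCycle ∧ w.length = d v - d u + 1 := by
  have hmem : ∀ x : V, x ∈ Finset.univ := Finset.mem_univ
  obtain ⟨p, hpl, hps, hpe⟩ := descend hnf (d v - d u) v (d u) (by omega)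
  have hanc : anc v (d u) = u := (hnf.norm u v (hmem u) (hmem v) h).2 (by omega)
  set D := d v - d u with hD
  have hdepth : ∀ t, t ≤ d v → d (anc v (d v - t)) = d v - t := by
    intro t _
    exact hnf.depth v (hmem v) (d v - t) (by omega)
  have hpath : p.IsPath := by
    rw [Walk.isPath_def, hps]
    refine List.Nodup.map_on ?_ List.nodup_range
    intro t ht t' ht' heq
    rw [List.mem_range] at ht ht'
    have e1 := hdepth t (by omega)
    have e2 := hdepth t' (by omega)
    rw [heq] at e1
    omega
  have hedge : s(u, v) ∉ p.edges := by
    rw [hpe]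
    intro hmem'
    obtain ⟨t, ht, heq⟩ := List.mem_map.1 hmem'
    rw [List.mem_range] at ht
    have e1 := hdepth t (by omega)
    have e2 := hdepth (t+1) (by omega)
    rw [Sym2.eq_iff] at heq
    rcases heq with ⟨h1, h2'⟩ | ⟨h1, h2'⟩
    · rw [h1] at e1; rw [h2'] at e2; omega
    · rw [h1] at e1; rw [h2'] at e2; omega
  refine ⟨Walk.cons h (p.copy rfl hanc), ?_, ?_⟩
  · rw [Walk.cons_isCycle_iff]
    constructor
    · rw [Walk.isPath_copy]; exact hpath
    · rw [Walk.edges_copy]; exact hedge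
  · simp [hpl]

end Descend

section Comb
variable {V : Type}

/-- Window property: any two entries at distance at most `k` are adjacent in `H`. -/
def Wnd (H : SimpleGraph V) (k : ℕ) (l : List V) : Prop :=
  ∀ (i j : ℕ) (hij : i < j) (_ : j ≤ i + k) (hj : j < l.length),
    H.Adj (l[i]'(Nat.lt_trans hij hj)) (l[j]'hj)

lemma wnd_clique {H : SimpleGraph V} {k : ℕ} {l : List V}
    (hnd : l.Nodup) (hc : ∀ x ∈ l, ∀ y ∈ l, x ≠ y → H.Adj x y) : Wnd H k l := by
  intro i j hij hjk hj
  have hi : i < l.length := Nat.lt_trans hij hj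
  refine hc _ (List.getElem_mem _) _ (List.getElem_mem _) ?_
  intro heq
  have := (List.nodup_iff_injective_get.1 hnd)
    (show l.get ⟨i, hi⟩ = l.get ⟨j, hj⟩ from heq)
  simp only [Fin.mk.injEq] at this
  omega

lemma wnd_append {H : SimpleGraph V} {k : ℕ} {l₁ l₂ : List V}
    (h1 : Wnd H k l₁) (h2 : Wnd H k l₂)
    (hcross : ∀ x ∈ l₁.drop (l₁.length - k), ∀ y ∈ l₂.take k, H.Adj x y) :
    Wnd H k (l₁ ++ l₂) := by
  intro i j hij hjk hj
  have hlen : (l₁ ++ l₂).length = l₁.length + l₂.length := List.length_append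
  by_cases hj1 : j < l₁.length
  · have hi1 : i < l₁.length := Nat.lt_trans hij hj1
    rw [List.getElem_append_left hi1, List.getElem_append_left hj1]
    exact h1 i j hij hjk hj1
  · by_cases hi1 : i < l₁.length
    · -- cross case
      rw [List.getElem_append_left hi1, List.getElem_append_right (by omega)]
      have hxm : l₁[i]'hi1 ∈ l₁.drop (l₁.length - k) := by
        have hd : i - (l₁.length - k) < (l₁.drop (l₁.length - k)).length := by
          rw [List.length_drop]; omega
        have he : (l₁.drop (l₁.length - k))[i - (l₁.length - k)]'hd = l₁[i]'hi1 := by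
          rw [List.getElem_drop]
          congr 1
          omega
        rw [← he]
        exact List.getElem_mem _
      have hjl : j - l₁.length < l₂.length := by omega
      have hym : l₂[j - l₁.length]'hjl ∈ l₂.take k := by
        have ht : j - l₁.length < (l₂.take k).length := by
          rw [List.length_take]; omega
        have he : (l₂.take k)[j - l₁.length]'ht = l₂[j - l₁.length]'hjl := by
          rw [List.getElem_take]
        rw [← he]
        exact List.getElem_mem _
      exact hcross _ hxm _ hym
    · rw [List.getElem_append_right (by omega), List.getElem_append_right (by omega)]
      exact h2 (i - l₁.length) (j - l₁.length) (by omega) (by omega) (by omega)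

/-- Existence of a `k`-subset consisting of elements of minimal weight. -/
lemma exists_min_weight_subset [DecidableEq V] (A : Finset V) (w : V → ℕ) :
    ∀ (k : ℕ), k ≤ A.card → ∃ L ⊆ A, L.card = k ∧ ∀ x ∈ L, ∀ y ∈ A \ L, w x ≤ w y := by
  intro k
  induction k with
  | zero => intro _; exact ⟨∅, Finset.empty_subset _, Finset.card_empty, by simp⟩
  | succ k ih =>
    intro hk
    obtain ⟨L, hLA, hLcard, hLmin⟩ := ih (by omega)
    have hne : (A \ L).Nonempty := by
      rw [← Finset.card_pos, Finset.card_sdiff_of_subset hLA]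
      omega
    obtain ⟨y₀, hy₀, hy₀min⟩ := Finset.exists_min_image (A \ L) w hne
    refine ⟨insert y₀ L, ?_, ?_, ?_⟩
    · exact Finset.insert_subset (Finset.mem_sdiff.1 hy₀).1 hLA
    · rw [Finset.card_insert_of_notMem (Finset.mem_sdiff.1 hy₀).2, hLcard]
    · intro x hx y hy
      have hy' : y ∈ A \ L := by
        rw [Finset.mem_sdiff] at hy ⊢
        exact ⟨hy.1, fun h => hy.2 (Finset.mem_insert_of_mem h)⟩
      rcases Finset.mem_insert.1 hx with rfl | hx
      · exact hy₀min y hy'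
      · exact hLmin x hx y hy'

/-- Average bound for the minimal weight subset. -/
lemma exists_min_weight_subset_sum [DecidableEq V] (A : Finset V) (w : V → ℕ) (k : ℕ)
    (hk : k ≤ A.card) :
    ∃ L ⊆ A, L.card = k ∧ A.card * (∑ x ∈ L, w x) ≤ k * ∑ x ∈ A, w x := by
  obtain ⟨L, hLA, hLcard, hLmin⟩ := exists_min_weight_subset A w k hk
  refine ⟨L, hLA, hLcard, ?_⟩
  have h1 : ∀ y ∈ A \ L, (∑ x ∈ L, w x) ≤ k * w y := by
    intro y hy
    calc (∑ x ∈ L, w x) ≤ ∑ _x ∈ L, w y := Finset.sum_le_sum (fun x hx => hLmin x hx y hy)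
    _ = L.card * w y := by rw [Finset.sum_const, smul_eq_mul]
    _ = k * w y := by rw [hLcard]
  have h2 : (A \ L).card * (∑ x ∈ L, w x) ≤ k * ∑ y ∈ A \ L, w y := by
    calc (A \ L).card * (∑ x ∈ L, w x) = ∑ _y ∈ A \ L, (∑ x ∈ L, w x) := by
          rw [Finset.sum_const, smul_eq_mul]
    _ ≤ ∑ y ∈ A \ L, k * w y := Finset.sum_le_sum h1
    _ = k * ∑ y ∈ A \ L, w y := by rw [Finset.mul_sum]
  have h3 : (A \ L).card = A.card - k := by rw [Finset.card_sdiff_of_subset hLA, hLcard]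
  have h4 : ∑ y ∈ A \ L, w y + ∑ x ∈ L, w x = ∑ x ∈ A, w x := Finset.sum_sdiff hLA
  have h5 : A.card * (∑ x ∈ L, w x)
      = (A.card - k) * (∑ x ∈ L, w x) + k * (∑ x ∈ L, w x) := by
    rw [← Nat.add_mul, Nat.sub_add_cancel hk]
  rw [h5, ← h4, Nat.mul_add]
  exact Nat.add_le_add (h3 ▸ h2) le_rfl

/-- Double counting: if each `v ∈ B` has at most one preimage in `A`, then the fibre counts
sum to at most `|B|`. -/
lemma sum_card_filter_le [DecidableEq V] (A B : Finset V) (P : V → V → Prop)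
    [∀ x v, Decidable (P x v)]
    (h : ∀ v ∈ B, ∀ x ∈ A, ∀ x' ∈ A, P x v → P x' v → x = x') :
    ∑ x ∈ A, (B.filter (fun v => P x v)).card ≤ B.card := by
  have h1 : ∀ x ∈ A, (B.filter (fun v => P x v)).card
      = ∑ v ∈ B, if P x v then 1 else 0 := by
    intro x _
    rw [Finset.card_filter]
  rw [Finset.sum_congr rfl h1, Finset.sum_comm]
  have h2 : ∀ v ∈ B, (∑ x ∈ A, if P x v then 1 else 0) ≤ 1 := by
    intro v hv
    rw [← Finset.card_filter]
    rw [Finset.card_le_one]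
    intro a ha b hb
    rw [Finset.mem_filter] at ha hb
    exact h v hv a ha.1 b hb.1 ha.2 hb.2
  calc (∑ v ∈ B, ∑ x ∈ A, if P x v then 1 else 0) ≤ ∑ _v ∈ B, 1 := Finset.sum_le_sum h2
  _ = B.card := by rw [Finset.sum_const, smul_eq_mul, Nat.mul_one]

end Comb

set_option maxHeartbeats 2000000 in
/-- If the complement of `H` has no long cycle and `H` has slightly more than `n` vertices,
then `H` contains `P_n^k`. -/
theorem cover_W {V : Type} [Fintype V] (H : SimpleGraph V) (k n : ℕ) (ε : ℝ)
    (hε0 : 0 < ε) (hε : ε ≤ 1 / ((k : ℝ) + 3)) (hn : 3 / ε^2 < (n : ℝ))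
    (hcard : (n : ℝ) + ((k : ℝ) + 2) * ε * n ≤ Fintype.card V)
    (hcomp : ∀ (x : V) (w : Hᶜ.Walk x x), w.IsCycle → (w.length : ℝ) < ε^2 * n) :
    Embeds (pathPower n k) H := by
  classical
  by_cases hn0 : n = 0
  · subst hn0
    exact ⟨fun i => i.elim0, fun i => i.elim0, fun u => u.elim0⟩
  have hn1 : 1 ≤ n := Nat.one_le_iff_ne_zero.2 hn0
  have hε2pos : (0:ℝ) < ε^2 := by positivity
  have h3lt : (3:ℝ) < ε^2 * n := by
    rw [div_lt_iff₀ hε2pos] at hn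
    linarith
  -- normal forest of the complement
  obtain ⟨d, anc, hnf⟩ := glf Hᶜ (Fintype.card V) Finset.univ (by simp)
  set T : ℕ := ⌈ε^2 * (n:ℝ)⌉₊ - 1 with hTdef
  have hceil4 : 4 ≤ ⌈ε^2 * (n:ℝ)⌉₊ := by
    have h1 : (3:ℕ) < ⌈ε^2 * (n:ℝ)⌉₊ := Nat.lt_ceil.2 (by exact_mod_cast h3lt)
    omega
  have hT3 : 3 ≤ T := by omega
  have hT1 : T + 1 = ⌈ε^2 * (n:ℝ)⌉₊ := by omega
  have hTle : (T:ℝ) ≤ ε^2 * n := by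
    have h1 : (⌈ε^2 * (n:ℝ)⌉₊ : ℝ) < ε^2 * n + 1 := Nat.ceil_lt_add_one (by positivity)
    have h2 : (T:ℝ) = (⌈ε^2 * (n:ℝ)⌉₊ : ℝ) - 1 := by
      rw [hTdef, Nat.cast_sub (by omega)]
      simp
    linarith
  have hTpos : 0 < T := by omega
  -- gap bound for complement edges
  have hgap : ∀ u v : V, Hᶜ.Adj u v → d u < d v → d v - d u < T := by
    intro u v hadj hlt
    by_cases h2 : d u + 2 ≤ d v
    · obtain ⟨c, hcyc, hclen⟩ := adj_cycle hnf hadj h2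
      have hc := hcomp u c hcyc
      rw [hclen] at hc
      have h3 : ((d v - d u + 1 : ℕ) : ℝ) < (⌈ε^2 * (n:ℝ)⌉₊ : ℝ) :=
        lt_of_lt_of_le hc (Nat.le_ceil _)
      have h4 : d v - d u + 1 < ⌈ε^2 * (n:ℝ)⌉₊ := by exact_mod_cast h3
      omega
    · omega
  have hGadj : ∀ u v : V, u ≠ v → ¬ H.Adj u v → Hᶜ.Adj u v := by
    intro u v h1 h2
    rw [compl_adj]
    exact ⟨h1, h2⟩
  have hblue_same : ∀ u v : V, u ≠ v → d u % T = d v % T → H.Adj u v := by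
    intro u v hne' hmod
    by_contra hnadj
    have hadj := hGadj u v hne' hnadj
    have hdne := (hnf.norm u v (Finset.mem_univ _) (Finset.mem_univ _) hadj).1
    rcases Nat.lt_or_ge (d u) (d v) with hlt | hge
    · have h1 := hgap u v hadj hlt
      have h2 : T ∣ d v - d u := (Nat.modEq_iff_dvd' (le_of_lt hlt)).1 hmod
      have h3 := Nat.le_of_dvd (by omega) h2
      omega
    · have hlt : d v < d u := by omega
      have h1 := hgap v u hadj.symm hlt
      have h2 : T ∣ d u - d v := (Nat.modEq_iff_dvd' (le_of_lt hlt)).1 hmod.symm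
      have h3 := Nat.le_of_dvd (by omega) h2
      omega
  have huniq : ∀ v x x' : V, Hᶜ.Adj x v → Hᶜ.Adj x' v → d x < d v → d x' < d v →
      d x % T = d x' % T → x = x' := by
    intro v x x' ha ha' hl hl' hm
    have g := hgap x v ha hl
    have g' := hgap x' v ha' hl'
    have hxx : d x = d x' := by
      rcases Nat.le_total (d x) (d x') with h | h
      · have hdvd : T ∣ d x' - d x := (Nat.modEq_iff_dvd' h).1 hm
        rcases Nat.eq_zero_or_pos (d x' - d x) with h0 | h0
        · omega
        · have := Nat.le_of_dvd h0 hdvd; omega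
      · have hdvd : T ∣ d x - d x' := (Nat.modEq_iff_dvd' h).1 hm.symm
        rcases Nat.eq_zero_or_pos (d x - d x') with h0 | h0
        · omega
        · have := Nat.le_of_dvd h0 hdvd; omega
    have e1 : anc v (d x) = x := (hnf.norm x v (Finset.mem_univ _) (Finset.mem_univ _) ha).2 hl
    have e2 : anc v (d x') = x' := (hnf.norm x' v (Finset.mem_univ _) (Finset.mem_univ _) ha').2 hl'
    rw [← e1, ← e2, hxx]
  -- residue cliques
  set B : ℕ := 5*k+5 with hBdef
  set Q : ℕ → Finset V := fun r => Finset.univ.filter (fun v => d v % T = r) with hQdef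
  have hQmem : ∀ (r : ℕ) (v : V), v ∈ Q r ↔ d v % T = r := by
    intro r v; simp [hQdef]
  have hQdisj : ∀ (r r' : ℕ) (v : V), v ∈ Q r → v ∈ Q r' → r = r' := by
    intro r r' v h h'
    rw [hQmem] at h h'
    omega
  have hclique : ∀ (r : ℕ), ∀ x ∈ Q r, ∀ y ∈ Q r, x ≠ y → H.Adj x y := by
    intro r x hx y hy hne'
    rw [hQmem] at hx hy
    exact hblue_same x y hne' (by omega)
  have hpart : Fintype.card V = ∑ r ∈ Finset.range T, (Q r).card := by
    rw [← Finset.card_univ]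
    refine Finset.card_eq_sum_card_fiberwise ?_
    intro v _
    exact Finset.mem_range.2 (Nat.mod_lt _ hTpos)
  set R : Finset ℕ := (Finset.range T).filter (fun r => B ≤ (Q r).card) with hRdef
  have hRB : ∀ r ∈ R, B ≤ (Q r).card := by
    intro r hr
    rw [hRdef, Finset.mem_filter] at hr
    exact hr.2
  have hdrop : ∑ r ∈ Finset.range T \ R, (Q r).card ≤ T * (B-1) := by
    have h1 : ∀ r ∈ Finset.range T \ R, (Q r).card ≤ B - 1 := by
      intro r hr
      rw [Finset.mem_sdiff, hRdef, Finset.mem_filter] at hr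
      have h2 : ¬ B ≤ (Q r).card := fun hB => hr.2 ⟨hr.1, hB⟩
      omega
    calc ∑ r ∈ Finset.range T \ R, (Q r).card ≤ ∑ _r ∈ Finset.range T \ R, (B-1) :=
          Finset.sum_le_sum h1
    _ = (Finset.range T \ R).card * (B-1) := by rw [Finset.sum_const, smul_eq_mul]
    _ ≤ T * (B-1) := by
        refine Nat.mul_le_mul_right _ ?_
        calc (Finset.range T \ R).card ≤ (Finset.range T).card :=
              Finset.card_le_card (Finset.sdiff_subset)
        _ = T := Finset.card_range T
  have hkeep : ∑ r ∈ Finset.range T \ R, (Q r).card + ∑ r ∈ R, (Q r).card = Fintype.card V := by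
    rw [hpart]
    exact Finset.sum_sdiff (by rw [hRdef]; exact Finset.filter_subset _ _)
  -- numeric: kept vertices are at least n
  have hKge : n ≤ ∑ r ∈ R, (Q r).card := by
    have hεn : (0:ℝ) ≤ ε * n := by positivity
    have hk3 : (0:ℝ) < (k:ℝ)+3 := by positivity
    have hε' : ε * ((k:ℝ)+3) ≤ 1 := by
      rw [le_div_iff₀ hk3] at hε
      linarith
    have hTBle : ((T * (B-1) : ℕ) : ℝ) ≤ ((k:ℝ)+2) * ε * n := by
      have hB1 : ((B - 1 : ℕ):ℝ) = 5*(k:ℝ)+4 := by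
        rw [hBdef]
        push_cast [show 5*k+5-1 = 5*k+4 from by omega]
        ring
      push_cast
      rw [hB1]
      have h1 : (T:ℝ) * (5*(k:ℝ)+4) ≤ (ε^2*n) * (5*(k:ℝ)+4) := by
        refine mul_le_mul_of_nonneg_right hTle ?_
        positivity
      have h2 : (ε^2*n) * (5*(k:ℝ)+4) ≤ ((k:ℝ)+2) * ε * n := by
        have h3 : (5*(k:ℝ)+4) * ε ≤ (k:ℝ)+2 := by
          nlinarith [mul_le_mul_of_nonneg_left hε' (show (0:ℝ) ≤ 5*(k:ℝ)+4 by positivity),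
            sq_nonneg ((k:ℝ)+1), hε0.le]
        nlinarith [hεn, hε0.le]
      linarith
    have hcv : (Fintype.card V : ℝ) ≤ ((∑ r ∈ R, (Q r).card : ℕ) : ℝ) + ((T * (B-1) : ℕ) : ℝ) := by
      have h1 : Fintype.card V ≤ (∑ r ∈ R, (Q r).card) + T * (B-1) := by omega
      exact_mod_cast h1
    have : (n:ℝ) ≤ ((∑ r ∈ R, (Q r).card : ℕ) : ℝ) := by linarith
    exact_mod_cast this
  -- the inductive list builder
  have hbuild : ∀ (rs : List ℕ), rs.Nodup → (∀ r ∈ rs, r ∈ R) →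
      ∀ (r₀ : ℕ) (F : Finset V), r₀ ∈ R → r₀ ∉ rs → F ⊆ Q r₀ → F.card = k →
      ∃ l : List V, l.Nodup ∧ (∀ x, x ∈ l ↔ (x ∈ Q r₀ ∨ ∃ r ∈ rs, x ∈ Q r)) ∧
        Wnd H k l ∧ (∀ y ∈ l.take k, y ∈ F) := by
    intro rs
    induction rs with
    | nil =>
      intro _ _ r₀ F hr₀ _ hFsub hFcard
      set l : List V := F.toList ++ (Q r₀ \ F).toList with hl
      have hlnd : l.Nodup := by
        rw [hl, List.nodup_append]
        refine ⟨Finset.nodup_toList _, Finset.nodup_toList _, ?_⟩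
        intro a ha b ha' hab
        subst hab
        rw [Finset.mem_toList] at ha ha'
        exact (Finset.mem_sdiff.1 ha').2 ha
      have hlQ : ∀ x ∈ l, x ∈ Q r₀ := by
        intro x hx
        rw [hl, List.mem_append, Finset.mem_toList, Finset.mem_toList] at hx
        rcases hx with h | h
        · exact hFsub h
        · exact (Finset.mem_sdiff.1 h).1
      refine ⟨l, hlnd, ?_, ?_, ?_⟩
      · intro x
        constructor
        · intro h
          exact Or.inl (hlQ x h)
        · rintro (h | ⟨r, hr, _⟩)
          · rw [hl, List.mem_append, Finset.mem_toList, Finset.mem_toList]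
            by_cases hF : x ∈ F
            · exact Or.inl hF
            · exact Or.inr (Finset.mem_sdiff.2 ⟨h, hF⟩)
          · exact absurd hr List.not_mem_nil
      · exact wnd_clique hlnd (fun x hx y hy hxy => hclique r₀ x (hlQ x hx) y (hlQ y hy) hxy)
      · intro y hy
        have hlen : F.toList.length = k := by rw [Finset.length_toList, hFcard]
        rw [hl, ← hlen, List.take_left] at hy
        exact Finset.mem_toList.1 hy
    | cons r' rs' ih =>
      intro hnd hmem r₀ F hr₀ hnotin hFsub hFcard
      have hr'R : r' ∈ R := hmem r' (List.mem_cons_self)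
      have hQr₀B : B ≤ (Q r₀).card := hRB r₀ hr₀
      have hQr'B : B ≤ (Q r').card := hRB r' hr'R
      set A : Finset V := Q r₀ \ F with hA
      have hAcard : A.card = (Q r₀).card - k := by
        rw [hA, Finset.card_sdiff_of_subset hFsub, hFcard]
      have hA4 : 4*k+5 ≤ A.card := by omega
      set w : V → ℕ := fun x => ((Q r').filter (fun v => Hᶜ.Adj x v ∧ d x < d v)).card with hw
      have hsumA : ∑ x ∈ A, w x ≤ (Q r').card := by
        rw [hw]
        refine sum_card_filter_le A (Q r') (fun x v => Hᶜ.Adj x v ∧ d x < d v) ?_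
        intro v _ x hx x' hx' hP hP'
        refine huniq v x x' hP.1 hP'.1 hP.2 hP'.2 ?_
        have h1 : x ∈ Q r₀ := (Finset.mem_sdiff.1 hx).1
        have h2 : x' ∈ Q r₀ := (Finset.mem_sdiff.1 hx').1
        rw [hQmem] at h1 h2
        omega
      obtain ⟨L, hLA, hLcard, hLsum⟩ := exists_min_weight_subset_sum A w k (by omega)
      have hLQ : L ⊆ Q r₀ := hLA.trans (Finset.sdiff_subset)
      set Φ : Finset V := (Q r').filter (fun v => ∃ x ∈ L, Hᶜ.Adj x v) with hΦ
      have hΦcard : Φ.card ≤ (∑ x ∈ L, w x) + k := by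
        have hΦsub : Φ ⊆ (L.biUnion (fun x => (Q r').filter (fun v => Hᶜ.Adj x v ∧ d x < d v)))
            ∪ (L.biUnion (fun x => (Q r').filter (fun v => Hᶜ.Adj x v ∧ d v < d x))) := by
          intro v hv
          rw [hΦ, Finset.mem_filter] at hv
          obtain ⟨hvQ, x, hxL, hadj⟩ := hv
          have hdx : d x ≠ d v := (hnf.norm x v (Finset.mem_univ _) (Finset.mem_univ _) hadj).1
          rcases Nat.lt_or_ge (d x) (d v) with h | h
          · exact Finset.mem_union_left _
              (Finset.mem_biUnion.2 ⟨x, hxL, Finset.mem_filter.2 ⟨hvQ, hadj, h⟩⟩)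
          · exact Finset.mem_union_right _
              (Finset.mem_biUnion.2 ⟨x, hxL, Finset.mem_filter.2 ⟨hvQ, hadj, by omega⟩⟩)
        calc Φ.card ≤ _ := Finset.card_le_card hΦsub
        _ ≤ (L.biUnion (fun x => (Q r').filter (fun v => Hᶜ.Adj x v ∧ d x < d v))).card
            + (L.biUnion (fun x => (Q r').filter (fun v => Hᶜ.Adj x v ∧ d v < d x))).card :=
          Finset.card_union_le _ _
        _ ≤ (∑ x ∈ L, w x) + k := by
          refine Nat.add_le_add ?_ ?_
          · refine le_trans (Finset.card_biUnion_le) ?_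
            rw [hw]
          · refine le_trans (Finset.card_biUnion_le) ?_
            calc ∑ x ∈ L, ((Q r').filter (fun v => Hᶜ.Adj x v ∧ d v < d x)).card
                ≤ ∑ _x ∈ L, 1 := by
                  refine Finset.sum_le_sum ?_
                  intro x _
                  rw [Finset.card_le_one]
                  intro v1 hv1 v2 hv2
                  rw [Finset.mem_filter] at hv1 hv2
                  refine huniq x v1 v2 hv1.2.1.symm hv2.2.1.symm hv1.2.2 hv2.2.2 ?_
                  have h1 := (hQmem r' v1).1 hv1.1
                  have h2 := (hQmem r' v2).1 hv2.1
                  omega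
            _ = k := by rw [Finset.sum_const, smul_eq_mul, Nat.mul_one, hLcard]
      have hkey : Φ.card + k ≤ (Q r').card := by
        have h1 : A.card * (∑ x ∈ L, w x) ≤ k * (Q r').card :=
          le_trans hLsum (Nat.mul_le_mul_left k hsumA)
        have h2 : (4*k+5) * (∑ x ∈ L, w x) ≤ A.card * (∑ x ∈ L, w x) :=
          Nat.mul_le_mul_right _ hA4
        have h3 : (4*k+5) * (∑ x ∈ L, w x) ≤ k * (Q r').card := le_trans h2 h1
        have h4 : 5*k+5 ≤ (Q r').card := by omega
        nlinarith [h3, h4, hΦcard]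
      obtain ⟨F', hF'sub, hF'card⟩ := Finset.exists_subset_card_eq (s := Q r' \ Φ) (n := k) (by
        have := Finset.card_sdiff_of_subset (Finset.filter_subset (fun v => ∃ x ∈ L, Hᶜ.Adj x v) (Q r'))
        rw [← hΦ] at this
        omega)
      have hF'Q : F' ⊆ Q r' := hF'sub.trans (Finset.sdiff_subset)
      obtain ⟨l', hl'nd, hl'mem, hl'wnd, hl'take⟩ := ih (List.nodup_cons.1 hnd).2
        (fun r hr => hmem r (List.mem_cons_of_mem _ hr)) r' F' hr'R
        (List.nodup_cons.1 hnd).1 hF'Q hF'card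
      -- assemble the list for this clique
      set lr : List V := (F.toList ++ (A \ L).toList) ++ L.toList with hlr
      have hlrmem : ∀ x, x ∈ lr ↔ x ∈ Q r₀ := by
        intro x
        rw [hlr, List.mem_append, List.mem_append, Finset.mem_toList, Finset.mem_toList,
          Finset.mem_toList]
        constructor
        · rintro ((h | h) | h)
          · exact hFsub h
          · exact (Finset.mem_sdiff.1 ((Finset.mem_sdiff.1 h).1)).1
          · exact hLQ h
        · intro h
          by_cases hF : x ∈ F
          · exact Or.inl (Or.inl hF)
          by_cases hL : x ∈ L
          · exact Or.inr hL
          · exact Or.inl (Or.inr (Finset.mem_sdiff.2 ⟨Finset.mem_sdiff.2 ⟨h, hF⟩, hL⟩))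
      have hlrnd : lr.Nodup := by
        rw [hlr, List.nodup_append]
        refine ⟨?_, Finset.nodup_toList _, ?_⟩
        · rw [List.nodup_append]
          refine ⟨Finset.nodup_toList _, Finset.nodup_toList _, ?_⟩
          intro a ha b ha' hab
          subst hab
          rw [Finset.mem_toList] at ha ha'
          exact (Finset.mem_sdiff.1 ((Finset.mem_sdiff.1 ha').1)).2 ha
        · intro a ha b ha' hab
          subst hab
          rw [Finset.mem_toList] at ha'
          rcases List.mem_append.1 ha with h | h
          · rw [Finset.mem_toList] at h
            exact (Finset.mem_sdiff.1 (hLA ha')).2 h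
          · rw [Finset.mem_toList] at h
            exact (Finset.mem_sdiff.1 h).2 ha'
      have hlrlen : lr.length = (Q r₀).card := by
        rw [hlr]
        simp only [List.length_append, Finset.length_toList]
        rw [Finset.card_sdiff_of_subset hLA, hAcard, hLcard, hFcard]
        omega
      have hfxlen : (F.toList ++ (A \ L).toList).length = lr.length - k := by
        simp only [List.length_append, Finset.length_toList]
        rw [Finset.card_sdiff_of_subset hLA, hAcard, hLcard, hFcard, hlrlen]
        omega
      have hlrdrop : lr.drop (lr.length - k) = L.toList := by
        rw [hlr, ← hfxlen, List.drop_left]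
      have hlrwnd : Wnd H k lr :=
        wnd_clique hlrnd
          (fun x hx y hy hxy => hclique r₀ x ((hlrmem x).1 hx) y ((hlrmem y).1 hy) hxy)
      have hcross : ∀ x ∈ lr.drop (lr.length - k), ∀ y ∈ l'.take k, H.Adj x y := by
        intro x hx y hy
        rw [hlrdrop, Finset.mem_toList] at hx
        have hyF' : y ∈ F' := hl'take y hy
        have hyQ : y ∈ Q r' \ Φ := hF'sub hyF'
        have hxQ : x ∈ Q r₀ := hLQ hx
        have hr0r' : r₀ ≠ r' := fun h => hnotin (h ▸ List.mem_cons_self)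
        have hxy : x ≠ y :=
          fun h => hr0r' (hQdisj _ _ x hxQ (h ▸ (Finset.mem_sdiff.1 hyQ).1))
        by_contra hnadj
        have hadj := hGadj x y hxy hnadj
        have hmemΦ : y ∈ Φ := by
          rw [hΦ, Finset.mem_filter]
          exact ⟨(Finset.mem_sdiff.1 hyQ).1, x, hx, hadj⟩
        exact (Finset.mem_sdiff.1 hyQ).2 hmemΦ
      refine ⟨lr ++ l', ?_, ?_, ?_, ?_⟩
      · rw [List.nodup_append]
        refine ⟨hlrnd, hl'nd, ?_⟩
        intro a ha b ha' hab
        subst hab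
        have haQ : a ∈ Q r₀ := (hlrmem a).1 ha
        have h2 := (hl'mem a).1 ha'
        rcases h2 with h2 | ⟨r, hr, h2⟩
        · exact hnotin ((hQdisj r₀ r' a haQ h2) ▸ List.mem_cons_self)
        · exact hnotin ((hQdisj r₀ r a haQ h2) ▸ List.mem_cons_of_mem _ hr)
      · intro x
        rw [List.mem_append, hlrmem, hl'mem]
        constructor
        · rintro (h | (h | ⟨r, hr, h⟩))
          · exact Or.inl h
          · exact Or.inr ⟨r', List.mem_cons_self, h⟩
          · exact Or.inr ⟨r, List.mem_cons_of_mem _ hr, h⟩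
        · rintro (h | ⟨r, hr, h⟩)
          · exact Or.inl h
          · rcases List.mem_cons.1 hr with rfl | hr'
            · exact Or.inr (Or.inl h)
            · exact Or.inr (Or.inr ⟨r, hr', h⟩)
      · exact wnd_append hlrwnd hl'wnd hcross
      · intro y hy
        have hlen : F.toList.length = k := by rw [Finset.length_toList, hFcard]
        rw [hlr, List.append_assoc, List.append_assoc, ← hlen, List.take_left] at hy
        exact Finset.mem_toList.1 hy
  -- apply the builder to the list of all kept residues
  rcases hRl : R.toList with _ | ⟨r₀, rest⟩
  · have hRempty : R = ∅ := by rwa [← Finset.toList_eq_nil]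
    rw [hRempty] at hKge
    simp at hKge
    omega
  · have hnodupR := R.nodup_toList
    rw [hRl] at hnodupR
    have hr₀R : r₀ ∈ R := by
      rw [← Finset.mem_toList, hRl]; exact List.mem_cons_self
    have hrestR : ∀ r ∈ rest, r ∈ R := by
      intro r hr
      rw [← Finset.mem_toList, hRl]; exact List.mem_cons_of_mem _ hr
    obtain ⟨F₀, hF₀sub, hF₀card⟩ := Finset.exists_subset_card_eq (s := Q r₀) (n := k)
      (le_trans (by omega) (hRB r₀ hr₀R))
    obtain ⟨l, hlnd, hlmem, hlwnd, -⟩ := hbuild rest (List.nodup_cons.1 hnodupR).2 hrestR r₀ F₀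
      hr₀R (List.nodup_cons.1 hnodupR).1 hF₀sub hF₀card
    have hltf : l.toFinset = R.biUnion Q := by
      ext x
      rw [List.mem_toFinset, hlmem, Finset.mem_biUnion]
      constructor
      · rintro (h | ⟨r, hr, h⟩)
        · exact ⟨r₀, hr₀R, h⟩
        · exact ⟨r, hrestR r hr, h⟩
      · rintro ⟨r, hrR, h⟩
        rw [← Finset.mem_toList, hRl, List.mem_cons] at hrR
        rcases hrR with rfl | hr
        · exact Or.inl h
        · exact Or.inr ⟨r, hr, h⟩
    have hlen : n ≤ l.length := by
      have h1 : l.length = l.toFinset.card := (List.toFinset_card_of_nodup hlnd).symm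
      rw [h1, hltf, Finset.card_biUnion ?_]
      · exact hKge
      · intro r hrR r' hr'R hne'
        rw [Function.onFun, Finset.disjoint_left]
        intro a ha ha'
        exact hne' (hQdisj r r' a ha ha')
    refine ⟨fun i => l[(i : ℕ)]'(lt_of_lt_of_le i.isLt hlen), ?_, ?_⟩
    · intro i j hij
      have h1 : l.get ⟨(i:ℕ), lt_of_lt_of_le i.isLt hlen⟩
          = l.get ⟨(j:ℕ), lt_of_lt_of_le j.isLt hlen⟩ := by
        simpa [List.get_eq_getElem] using hij
      have h2 := List.nodup_iff_injective_get.1 hlnd h1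
      exact Fin.ext (by simpa using congrArg Fin.val h2)
    · intro u v huv
      obtain ⟨hne', hdist⟩ := huv
      rcases Nat.lt_or_ge (u:ℕ) (v:ℕ) with h | h
      · have hd : (v:ℕ) ≤ (u:ℕ) + k := by
          have := Nat.dist_eq_sub_of_le (le_of_lt h)
          omega
        exact hlwnd (u:ℕ) (v:ℕ) h hd (lt_of_lt_of_le v.isLt hlen)
      · have hvu : (v:ℕ) < (u:ℕ) := by
          rcases Nat.lt_or_ge (v:ℕ) (u:ℕ) with h' | h'
          · exact h'
          · exact absurd (Fin.ext (by omega : (u:ℕ) = (v:ℕ))) hne'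
        have hd : (u:ℕ) ≤ (v:ℕ) + k := by
          have := Nat.dist_eq_sub_of_le (le_of_lt hvu)
          rw [Nat.dist_comm] at this
          omega
        exact (hlwnd (v:ℕ) (u:ℕ) hvu hd (lt_of_lt_of_le u.isLt hlen)).symm
end

section
/- For every k ≥ 2 and every positive integer t, R(C^k_{(k+1)t}, C^k_{(k+1)t}) ≥ t(k+1)² − 2k and R(P^k_{(k+1)t}, P^k_{(k+1)t}) ≥ t(k+1)² − 2k. -/
open SimpleGraph Finset

namespace RPL

/-- Block descriptor of a vertex value. -/
def dsc (k t x : ℕ) : ℕ × ℕ :=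
  if x < k*(k*t-1) then (0, x / (k*t-1))
  else if x < k*(k*t-1) + k*(2*t-1) then (1, (x - k*(k*t-1)) / (2*t-1))
  else (2, 0)

/-- Red relation between block descriptors. -/
def redRel (p q : ℕ × ℕ) : Prop :=
  (p.1 = 0 ∧ q.1 = 0 ∧ p.2 = q.2) ∨ (p.1 = 0 ∧ q.1 = 1 ∧ p.2 = q.2) ∨
  (p.1 = 1 ∧ q.1 = 0 ∧ p.2 = q.2) ∨ (p.1 = 1 ∧ q.1 = 1 ∧ p.2 ≠ q.2) ∨
  (p.1 = 1 ∧ q.1 = 2) ∨ (p.1 = 2 ∧ q.1 = 1)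

lemma redRel_symm {p q : ℕ × ℕ} (h : redRel p q) : redRel q p := by
  unfold redRel at *
  rcases h with ⟨a,b,c⟩|⟨a,b,c⟩|⟨a,b,c⟩|⟨a,b,c⟩|⟨a,b⟩|⟨a,b⟩
  · exact Or.inl ⟨b,a,c.symm⟩
  · exact Or.inr (Or.inr (Or.inl ⟨b,a,c.symm⟩))
  · exact Or.inr (Or.inl ⟨b,a,c.symm⟩)
  · exact Or.inr (Or.inr (Or.inr (Or.inl ⟨b,a,Ne.symm c⟩)))
  · exact Or.inr (Or.inr (Or.inr (Or.inr (Or.inr ⟨b,a⟩))))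
  · exact Or.inr (Or.inr (Or.inr (Or.inr (Or.inl ⟨b,a⟩))))

/-- The extremal red graph on `Fin b`. -/
def RedG (k t b : ℕ) : SimpleGraph (Fin b) where
  Adj u v := u ≠ v ∧ redRel (dsc k t u.val) (dsc k t v.val)
  symm := by constructor; intro u v h; exact ⟨h.1.symm, redRel_symm h.2⟩
  loopless := by constructor; intro u h; exact h.1 rfl

/-- Case analysis for descriptors, with interval bounds. -/
lemma dsc_spec (k t : ℕ) (hk : 2 ≤ k) (ht : 1 ≤ t) (x : ℕ) :
    (∃ i, i < k ∧ dsc k t x = (0, i) ∧ i*(k*t-1) ≤ x ∧ x < i*(k*t-1) + (k*t-1)) ∨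
    (∃ j, j < k ∧ dsc k t x = (1, j) ∧
      k*(k*t-1) + j*(2*t-1) ≤ x ∧ x < k*(k*t-1) + j*(2*t-1) + (2*t-1)) ∨
    (dsc k t x = (2,0) ∧ k*(k*t-1) + k*(2*t-1) ≤ x) := by
  have ha : 0 < k*t - 1 := by
    have : 2 ≤ k*t := le_trans hk (Nat.le_mul_of_pos_right k ht)
    omega
  have hc : 0 < 2*t - 1 := by omega
  unfold dsc
  split_ifs with h1 h2
  · left
    have hco1 : k*(k*t-1) = (k*t-1)*k := mul_comm ..
    have hd1 : x / (k*t-1) * (k*t-1) ≤ x := Nat.div_mul_le_self ..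
    have hd2 := Nat.mod_add_div x (k*t-1)
    have hd3 := Nat.mod_lt x ha
    have hco2 : x / (k*t-1) * (k*t-1) = (k*t-1) * (x / (k*t-1)) := mul_comm ..
    refine ⟨x / (k*t-1), ?_, rfl, ?_, ?_⟩
    · exact Nat.div_lt_of_lt_mul (by omega)
    · omega
    · omega
  · right; left
    have hco1 : k*(2*t-1) = (2*t-1)*k := mul_comm ..
    have hd1 : (x - k*(k*t-1)) / (2*t-1) * (2*t-1) ≤ x - k*(k*t-1) := Nat.div_mul_le_self ..
    have hd2 := Nat.mod_add_div (x - k*(k*t-1)) (2*t-1)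
    have hd3 := Nat.mod_lt (x - k*(k*t-1)) hc
    have hco2 : (x - k*(k*t-1)) / (2*t-1) * (2*t-1) = (2*t-1) * ((x - k*(k*t-1)) / (2*t-1)) := mul_comm ..
    refine ⟨(x - k*(k*t-1)) / (2*t-1), ?_, rfl, ?_, ?_⟩
    · exact Nat.div_lt_of_lt_mul (by omega)
    · omega
    · omega
  · right; right; exact ⟨rfl, by omega⟩

end RPL
-- COUNTING LEMMAS
namespace RPL

lemma card_pre_le {n' b : ℕ} (f : Fin n' → Fin b) (hf : Function.Injective f)
    (P : Fin n' → Prop) [DecidablePred P] (lo len : ℕ)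
    (h : ∀ v, P v → lo ≤ (f v).val ∧ (f v).val < lo + len) :
    (Finset.univ.filter P).card ≤ len := by
  have h1 : (Finset.univ.filter P).card ≤ (Finset.Ico lo (lo+len)).card := by
    apply Finset.card_le_card_of_injOn (fun v => (f v).val)
    · intro v hv
      rw [Finset.mem_coe, Finset.mem_filter] at hv
      rw [Finset.mem_coe, Finset.mem_Ico]
      exact h v hv.2
    · intro x _ y _ hxy
      exact hf (Fin.val_injective hxy)
  rw [Nat.card_Ico] at h1
  omega

lemma card_indep_le (k t n : ℕ) (hn : n = (k+1)*t) (P : Fin n → Prop) [DecidablePred P]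
    (h : ∀ u v : Fin n, P u → P v → u ≠ v → Nat.dist u.val v.val ≤ k → False) :
    (Finset.univ.filter P).card ≤ t := by
  have h1 : (Finset.univ.filter P).card ≤ (Finset.range t).card := by
    apply Finset.card_le_card_of_injOn (fun v => v.val / (k+1))
    · intro v _
      rw [Finset.mem_coe, Finset.mem_range]
      exact Nat.div_lt_of_lt_mul (by have := v.isLt; omega)
    · intro x hx y hy hxy
      by_contra hne
      simp only [Finset.coe_filter, Set.mem_setOf_eq, Finset.mem_univ, true_and] at hx hy
      refine h x y hx hy hne ?_
      have e1 := Nat.mod_add_div x.val (k+1)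
      have e2 := Nat.mod_add_div y.val (k+1)
      have m1 : x.val % (k+1) < k+1 := Nat.mod_lt _ (by omega)
      have m2 : y.val % (k+1) < k+1 := Nat.mod_lt _ (by omega)
      have e3 : (k+1)*(x.val/(k+1)) = (k+1)*(y.val/(k+1)) := by
        simp only at hxy
        rw [hxy]
      have hde : Nat.dist x.val y.val = (x.val - y.val) + (y.val - x.val) := rfl
      omega
  rw [Finset.card_range] at h1
  exact h1

lemma distle {k p q : ℕ} (h1 : p ≤ q + k) (h2 : q ≤ p + k) : Nat.dist p q ≤ k := by
  have : Nat.dist p q = (p - q) + (q - p) := rfl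
  omega

lemma distle_inv {k p q : ℕ} (h : Nat.dist p q ≤ k) : p ≤ q + k ∧ q ≤ p + k := by
  have : Nat.dist p q = (p - q) + (q - p) := rfl
  omega

theorem red_free (k t n b : ℕ) (hk : 2 ≤ k) (ht : 1 ≤ t) (hn : n = (k+1)*t)
    (hb : b ≤ k*(k*t-1) + k*(2*t-1) + (t-1))
    (f : Fin n → Fin b) (hf : Function.Injective f)
    (hadj : ∀ u v : Fin n, u ≠ v → Nat.dist u.val v.val ≤ k →
      redRel (dsc k t (f u).val) (dsc k t (f v).val)) : False := by
  have hkt : 2 ≤ k*t := le_trans hk (Nat.le_mul_of_pos_right k ht)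
  have hnk : k + 1 ≤ n := by
    have : (k+1)*1 ≤ (k+1)*t := Nat.mul_le_mul_left _ ht
    omega
  set D : Fin n → ℕ × ℕ := fun v => dsc k t (f v).val with hD
  have hDd : ∀ v : Fin n, dsc k t (f v).val = D v := fun v => rfl
  have adjpos : ∀ x y : Fin n, x.val ≠ y.val → x.val ≤ y.val + k → y.val ≤ x.val + k →
      redRel (D x) (D y) := by
    intro x y h1 h2 h3
    exact hadj x y (fun h => h1 (congrArg Fin.val h)) (distle h2 h3)
  have oneC : ∀ (i : ℕ) (x y : Fin n), x.val ≠ y.val → x.val ≤ y.val + k →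
      y.val ≤ x.val + k → D x = (1,i) → D y = (1,i) → False := by
    intro i x y h1 h2 h3 e1 e2
    have hr := adjpos x y h1 h2 h3
    rw [e1, e2] at hr
    unfold redRel at hr
    simp at hr
  have windowA : ∀ (u : ℕ), ∀ x₀ : Fin n, u ≤ x₀.val → x₀.val ≤ u + k →
      (D x₀).1 = 0 → ∀ x : Fin n, u ≤ x.val → x.val ≤ u + k →
      D x = (0, (D x₀).2) ∨ D x = (1, (D x₀).2) := by
    intro u x₀ ha1 ha2 h0 x hx1 hx2
    by_cases hxx : x.val = x₀.val
    · left
      have hxe : x = x₀ := Fin.val_injective hxx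
      subst hxe
      exact Prod.ext h0 rfl
    · have hr := adjpos x₀ x (fun h => hxx h.symm) (by omega) (by omega)
      unfold redRel at hr
      rcases hr with ⟨a1,b1,c1⟩|⟨a1,b1,c1⟩|⟨a1,b1,c1⟩|⟨a1,b1,c1⟩|⟨a1,b1⟩|⟨a1,b1⟩
      · left; exact Prod.ext b1 c1.symm
      · right; exact Prod.ext b1 c1.symm
      · omega
      · omega
      · omega
      · omega
  -- main case split
  by_cases hA : ∃ x : Fin n, (D x).1 = 0
  · -- propagate
    obtain ⟨x₀, hx₀⟩ := hA
    set i₀ := (D x₀).2 with hi₀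
    set W : ℕ → Prop := fun u => ∃ x : Fin n, u ≤ x.val ∧ x.val ≤ u + k ∧ D x = (0, i₀)
      with hW
    have wconc : ∀ u, W u → ∀ x : Fin n, u ≤ x.val → x.val ≤ u + k →
        D x = (0, i₀) ∨ D x = (1, i₀) := by
      intro u hw x h1 h2
      obtain ⟨z, hz1, hz2, hz3⟩ := hw
      have h0 : (D z).1 = 0 := by rw [hz3]
      have h2' : (D z).2 = i₀ := by rw [hz3]
      have := windowA u z hz1 hz2 h0 x h1 h2
      rw [h2'] at this
      exact this
    have stepup : ∀ u, u + 1 + k < n → W u → W (u+1) := by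
      intro u hu hw
      have p1 : u + 1 < n := by omega
      have p2 : u + 2 < n := by omega
      have d1 := wconc u hw ⟨u+1, p1⟩ (by show u ≤ u+1; omega) (by show u+1 ≤ u+k; omega)
      have d2 := wconc u hw ⟨u+2, p2⟩ (by show u ≤ u+2; omega) (by show u+2 ≤ u+k; omega)
      rcases d1 with d1 | d1
      · exact ⟨⟨u+1, p1⟩, by show u+1 ≤ u+1; omega, by show u+1 ≤ u+1+k; omega, d1⟩
      rcases d2 with d2 | d2
      · exact ⟨⟨u+2, p2⟩, by show u+1 ≤ u+2; omega, by show u+2 ≤ u+1+k; omega, d2⟩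
      exact absurd d2 (fun h => oneC i₀ ⟨u+1,p1⟩ ⟨u+2,p2⟩
        (by show u+1 ≠ u+2; omega) (by show u+1 ≤ u+2+k; omega)
        (by show u+2 ≤ u+1+k; omega) d1 h)
    have stepdown : ∀ u, u + 1 + k < n → W (u+1) → W u := by
      intro u hu hw
      have p1 : u + 1 < n := by omega
      have p2 : u + 2 < n := by omega
      have d1 := wconc (u+1) hw ⟨u+1, p1⟩ (by show u+1 ≤ u+1; omega)
        (by show u+1 ≤ u+1+k; omega)
      have d2 := wconc (u+1) hw ⟨u+2, p2⟩ (by show u+1 ≤ u+2; omega)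
        (by show u+2 ≤ u+1+k; omega)
      rcases d1 with d1 | d1
      · exact ⟨⟨u+1, p1⟩, by show u ≤ u+1; omega, by show u+1 ≤ u+k; omega, d1⟩
      rcases d2 with d2 | d2
      · exact ⟨⟨u+2, p2⟩, by show u ≤ u+2; omega, by show u+2 ≤ u+k; omega, d2⟩
      exact absurd d2 (fun h => oneC i₀ ⟨u+1,p1⟩ ⟨u+2,p2⟩
        (by show u+1 ≠ u+2; omega) (by show u+1 ≤ u+2+k; omega)
        (by show u+2 ≤ u+1+k; omega) d1 h)
    have hx₀v := x₀.isLt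
    set u₀ := min x₀.val (n - (k+1)) with hu₀
    have base : W u₀ := by
      refine ⟨x₀, by omega, by omega, ?_⟩
      exact Prod.ext hx₀ rfl
    have up : ∀ m, u₀ + m + k < n → W (u₀ + m) := by
      intro m
      induction m with
      | zero => intro _; exact base
      | succ m ih =>
        intro h
        have e : u₀ + (m+1) = (u₀ + m) + 1 := by omega
        rw [e]
        exact stepup (u₀+m) (by omega) (ih (by omega))
    have down : ∀ m, m ≤ u₀ → W (u₀ - m) := by
      intro m
      induction m with
      | zero => intro _; exact base
      | succ m ih =>
        intro h
        have hval : u₀ + k < n := by omega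
        have e : (u₀ - (m+1)) + 1 = u₀ - m := by omega
        apply stepdown (u₀ - (m+1)) (by omega)
        rw [e]
        exact ih (by omega)
    have allW : ∀ u, u + k < n → W u := by
      intro u hu
      rcases le_or_gt u₀ u with h | h
      · have e : u = u₀ + (u - u₀) := by omega
        rw [e]; exact up _ (by omega)
      · have e : u = u₀ - (u₀ - u) := by omega
        rw [e]; exact down _ (by omega)
    have hall : ∀ v : Fin n, D v = (0, i₀) ∨ D v = (1, i₀) := by
      intro v
      have hv := v.isLt
      have hu : min v.val (n - (k+1)) + k < n := by omega
      exact wconc _ (allW _ hu) v (by omega) (by omega)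
    -- counting
    have c1 : (Finset.univ.filter (fun v : Fin n => D v = (0,i₀))).card ≤ k*t-1 := by
      apply card_pre_le f hf _ (i₀*(k*t-1)) (k*t-1)
      intro v hv
      rcases dsc_spec k t hk ht (f v).val with ⟨i,hi,he,hl,hr⟩|⟨j,hj,he,hl,hr⟩|⟨he,hl⟩
      · rw [hDd, hv] at he
        simp only [Prod.mk.injEq] at he
        rw [he.2]
        exact ⟨hl, hr⟩
      · rw [hDd, hv] at he
        simp at he
      · rw [hDd, hv] at he
        simp at he
    have c2 : (Finset.univ.filter (fun v : Fin n => D v = (1,i₀))).card ≤ t := by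
      apply card_indep_le k t n hn
      intro u v hu hv hne hdist
      exact oneC i₀ u v (fun h => hne (Fin.val_injective h))
        (by have := distle_inv hdist; omega) (by have := distle_inv hdist; omega) hu hv
    have cover : (Finset.univ : Finset (Fin n)) ⊆
        (Finset.univ.filter (fun v : Fin n => D v = (0,i₀))) ∪
        (Finset.univ.filter (fun v : Fin n => D v = (1,i₀))) := by
      intro v _
      rw [Finset.mem_union, Finset.mem_filter, Finset.mem_filter]
      rcases hall v with h | h
      · exact Or.inl ⟨Finset.mem_univ v, h⟩
      · exact Or.inr ⟨Finset.mem_univ v, h⟩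
    have hcard : n ≤ (k*t-1) + t := by
      calc n = (Finset.univ : Finset (Fin n)).card := by simp
      _ ≤ _ := Finset.card_le_card cover
      _ ≤ _ := Finset.card_union_le _ _
      _ ≤ (k*t-1) + t := add_le_add c1 c2
    have he : (k+1)*t = k*t + t := by ring
    omega
  · -- all in C/Y blocks
    push_neg at hA
    have cY : (Finset.univ.filter (fun v : Fin n => (D v).1 = 2)).card ≤ t-1 := by
      apply card_pre_le f hf _ (k*(k*t-1) + k*(2*t-1)) (t-1)
      intro v hv
      rcases dsc_spec k t hk ht (f v).val with ⟨i,hi,he,hl,hr⟩|⟨j,hj,he,hl,hr⟩|⟨he,hl⟩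
      · rw [hDd] at he; rw [he] at hv; simp at hv
      · rw [hDd] at he; rw [he] at hv; simp at hv
      · have := (f v).isLt
        exact ⟨hl, by omega⟩
    have cC : ∀ j : ℕ, (Finset.univ.filter (fun v : Fin n => D v = (1,j))).card ≤ t := by
      intro j
      apply card_indep_le k t n hn
      intro u v hu hv hne hdist
      exact oneC j u v (fun h => hne (Fin.val_injective h))
        (by have := distle_inv hdist; omega) (by have := distle_inv hdist; omega) hu hv
    have cover : (Finset.univ : Finset (Fin n)) ⊆
        ((Finset.range k).biUnion (fun j => Finset.univ.filter (fun v : Fin n => D v = (1,j)))) ∪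
        (Finset.univ.filter (fun v : Fin n => (D v).1 = 2)) := by
      intro v _
      rw [Finset.mem_union, Finset.mem_biUnion]
      rcases dsc_spec k t hk ht (f v).val with ⟨i,hi,he,hl,hr⟩|⟨j,hj,he,hl,hr⟩|⟨he,hl⟩
      · rw [hDd] at he
        exact absurd (by rw [he]) (hA v)
      · rw [hDd] at he
        exact Or.inl ⟨j, Finset.mem_range.mpr hj, by
          rw [Finset.mem_filter]; exact ⟨Finset.mem_univ v, he⟩⟩
      · rw [hDd] at he
        exact Or.inr (by rw [Finset.mem_filter]; exact ⟨Finset.mem_univ v, by rw [he]⟩)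
    have hsum : ((Finset.range k).biUnion
        (fun j => Finset.univ.filter (fun v : Fin n => D v = (1,j)))).card ≤ k * t := by
      calc _ ≤ ∑ j ∈ Finset.range k,
            (Finset.univ.filter (fun v : Fin n => D v = (1,j))).card :=
          Finset.card_biUnion_le
      _ ≤ (Finset.range k).card • t := Finset.sum_le_card_nsmul _ _ t (fun j _ => cC j)
      _ = k * t := by rw [Finset.card_range, smul_eq_mul]
    have hcard : n ≤ k*t + (t-1) := by
      calc n = (Finset.univ : Finset (Fin n)).card := by simp
      _ ≤ _ := Finset.card_le_card cover
      _ ≤ _ := Finset.card_union_le _ _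
      _ ≤ k*t + (t-1) := add_le_add hsum cY
    have he : (k+1)*t = k*t + t := by ring
    omega

end RPL
namespace RPL

lemma dsc_fst0 {k t : ℕ} (hk : 2 ≤ k) (ht : 1 ≤ t) (x : ℕ) (h : (dsc k t x).1 = 0) :
    (dsc k t x).2 < k := by
  rcases dsc_spec k t hk ht x with ⟨i,hi,he,_,_⟩|⟨j,hj,he,_,_⟩|⟨he,_⟩
  · rw [he]; exact hi
  · rw [he] at h; simp at h
  · rw [he] at h; simp at h

lemma dsc_fst1 {k t : ℕ} (hk : 2 ≤ k) (ht : 1 ≤ t) (x : ℕ) (h : (dsc k t x).1 = 1) :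
    (dsc k t x).2 < k := by
  rcases dsc_spec k t hk ht x with ⟨i,hi,he,_,_⟩|⟨j,hj,he,_,_⟩|⟨he,_⟩
  · rw [he] at h; simp at h
  · rw [he]; exact hj
  · rw [he] at h; simp at h

theorem blue_free (k t n b : ℕ) (hk : 2 ≤ k) (ht : 1 ≤ t) (hn : n = (k+1)*t)
    (hb : b ≤ k*(k*t-1) + k*(2*t-1) + (t-1))
    (f : Fin n → Fin b) (hf : Function.Injective f)
    (hadj : ∀ u v : Fin n, u ≠ v → Nat.dist u.val v.val ≤ k →
      ¬ redRel (dsc k t (f u).val) (dsc k t (f v).val)) : False := by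
  have hkt : 2 ≤ k*t := le_trans hk (Nat.le_mul_of_pos_right k ht)
  have hnk : k + 1 ≤ n := by
    have : (k+1)*1 ≤ (k+1)*t := Nat.mul_le_mul_left _ ht
    omega
  set D : Fin n → ℕ × ℕ := fun v => dsc k t (f v).val with hD
  have hDd : ∀ v : Fin n, dsc k t (f v).val = D v := fun v => rfl
  have adjpos : ∀ x y : Fin n, x.val ≠ y.val → x.val ≤ y.val + k → y.val ≤ x.val + k →
      ¬ redRel (D x) (D y) := by
    intro x y h1 h2 h3
    exact hadj x y (fun h => h1 (congrArg Fin.val h)) (distle h2 h3)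
  have oneA : ∀ (i : ℕ) (x y : Fin n), x.val ≠ y.val → x.val ≤ y.val + k →
      y.val ≤ x.val + k → D x = (0,i) → D y = (0,i) → False := by
    intro i x y h1 h2 h3 e1 e2
    apply adjpos x y h1 h2 h3
    rw [e1, e2]
    exact Or.inl ⟨rfl, rfl, rfl⟩
  have windowC : ∀ (u : ℕ), ∀ x₀ : Fin n, u ≤ x₀.val → x₀.val ≤ u + k →
      (D x₀).1 = 1 → ∀ x : Fin n, u ≤ x.val → x.val ≤ u + k →
      D x = (1, (D x₀).2) ∨ ((D x).1 = 0 ∧ (D x).2 ≠ (D x₀).2) := by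
    intro u x₀ ha1 ha2 h0 x hx1 hx2
    by_cases hxx : x.val = x₀.val
    · left
      have hxe : x = x₀ := Fin.val_injective hxx
      subst hxe
      exact Prod.ext h0 rfl
    · have hr := adjpos x₀ x (fun h => hxx h.symm) (by omega) (by omega)
      rcases dsc_spec k t hk ht (f x).val with ⟨i,hi,he,_,_⟩|⟨j,hj,he,_,_⟩|⟨he,_⟩ <;>
        rw [hDd] at he
      · right
        refine ⟨by rw [he], ?_⟩
        intro hcon
        apply hr
        rw [he] at hcon ⊢
        exact Or.inr (Or.inr (Or.inl ⟨h0, rfl, hcon.symm⟩))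
      · left
        rw [he]
        by_contra hcon
        apply hr
        rw [he]
        refine Or.inr (Or.inr (Or.inr (Or.inl ⟨h0, rfl, ?_⟩)))
        intro hq
        apply hcon
        rw [hq]
      · exfalso
        apply hr
        rw [he]
        exact Or.inr (Or.inr (Or.inr (Or.inr (Or.inl ⟨h0, rfl⟩))))
  by_cases hC : ∃ x : Fin n, (D x).1 = 1
  · obtain ⟨x₀, hx₀⟩ := hC
    set j₀ := (D x₀).2 with hj₀
    have hj₀k : j₀ < k := dsc_fst1 hk ht (f x₀).val hx₀
    set W : ℕ → Prop := fun u => ∃ x : Fin n, u ≤ x.val ∧ x.val ≤ u + k ∧ D x = (1, j₀)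
      with hW
    have wconc : ∀ u, W u → ∀ x : Fin n, u ≤ x.val → x.val ≤ u + k →
        D x = (1, j₀) ∨ ((D x).1 = 0 ∧ (D x).2 ≠ j₀) := by
      intro u hw x h1 h2
      obtain ⟨z, hz1, hz2, hz3⟩ := hw
      have h0 : (D z).1 = 1 := by rw [hz3]
      have h2' : (D z).2 = j₀ := by rw [hz3]
      have := windowC u z hz1 hz2 h0 x h1 h2
      rw [h2'] at this
      exact this
    -- find a C_{j₀} vertex among k consecutive positions
    have findC : ∀ u, u + 1 + k < n → W u → ∃ x : Fin n, u+1 ≤ x.val ∧ x.val ≤ u + k ∧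
        D x = (1, j₀) := by
      intro u hu hw
      by_contra hex
      push_neg at hex
      have hbnd : ∀ m ∈ Finset.Ico (u+1) (u+k+1), m < n := by
        intro m hm; rw [Finset.mem_Ico] at hm; omega
      set S : Finset (Fin n) := Finset.attachFin (Finset.Ico (u+1) (u+k+1)) hbnd with hS
      have hcardS : S.card = k := by
        rw [hS, Finset.card_attachFin, Nat.card_Ico]; omega
      have hmem : ∀ x : Fin n, x ∈ S ↔ u+1 ≤ x.val ∧ x.val < u+k+1 := by
        intro x; rw [hS, Finset.mem_attachFin, Finset.mem_Ico]
      have hAS : ∀ x ∈ S, (D x).1 = 0 ∧ (D x).2 ≠ j₀ := by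
        intro x hx
        rw [hmem] at hx
        rcases wconc u hw x (by omega) (by omega) with h | h
        · exact absurd h (hex x (by omega) (by omega))
        · exact h
      have hmaps : ∀ x ∈ S, (D x).2 ∈ (Finset.range k).erase j₀ := by
        intro x hx
        rw [Finset.mem_erase, Finset.mem_range]
        exact ⟨(hAS x hx).2, dsc_fst0 hk ht (f x).val (hAS x hx).1⟩
      have hlt : ((Finset.range k).erase j₀).card < S.card := by
        rw [Finset.card_erase_of_mem (Finset.mem_range.mpr hj₀k), Finset.card_range, hcardS]
        omega
      obtain ⟨x, hxS, y, hyS, hxy, hEq⟩ :=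
        Finset.exists_ne_map_eq_of_card_lt_of_maps_to hlt hmaps
      rw [hmem] at hxS hyS
      apply oneA ((D x).2) x y (fun h => hxy (Fin.val_injective h)) (by omega) (by omega)
      · exact Prod.ext (hAS x (by rw [hmem]; omega)).1 rfl
      · exact Prod.ext (hAS y (by rw [hmem]; omega)).1 (by rw [hEq])
    have stepup : ∀ u, u + 1 + k < n → W u → W (u+1) := by
      intro u hu hw
      obtain ⟨x, h1, h2, h3⟩ := findC u hu hw
      exact ⟨x, h1, by omega, h3⟩
    have stepdown : ∀ u, u + 1 + k < n → W (u+1) → W u := by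
      intro u hu hw
      -- use window at u+1, positions in [u+1, u+1+k]; find C vertex in [u+2, u+1+k]? 
      -- simpler: from W (u+1), wconc at u+1; we need a C_{j₀} vertex with val in [u, u+k].
      obtain ⟨z, hz1, hz2, hz3⟩ := hw
      by_cases hzin : z.val ≤ u + k
      · exact ⟨z, by omega, by omega, hz3⟩
      · -- z.val = u+1+k; use findC at u+1 reversed: positions [u+1, u+k] ⊆ window of u+1
        have hw1 : W (u+1) := ⟨z, hz1, hz2, hz3⟩
        show ∃ x : Fin n, u ≤ x.val ∧ x.val ≤ u + k ∧ D x = (1, j₀)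
        by_contra hex
        push_neg at hex
        have hbnd : ∀ m ∈ Finset.Ico (u+1) (u+k+1), m < n := by
          intro m hm; rw [Finset.mem_Ico] at hm; omega
        set S : Finset (Fin n) := Finset.attachFin (Finset.Ico (u+1) (u+k+1)) hbnd with hS
        have hcardS : S.card = k := by
          rw [hS, Finset.card_attachFin, Nat.card_Ico]; omega
        have hmem : ∀ x : Fin n, x ∈ S ↔ u+1 ≤ x.val ∧ x.val < u+k+1 := by
          intro x; rw [hS, Finset.mem_attachFin, Finset.mem_Ico]
        have hAS : ∀ x ∈ S, (D x).1 = 0 ∧ (D x).2 ≠ j₀ := by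
          intro x hx
          rw [hmem] at hx
          rcases wconc (u+1) hw1 x (by omega) (by omega) with h | h
          · exact absurd h (hex x (by omega) (by omega))
          · exact h
        have hmaps : ∀ x ∈ S, (D x).2 ∈ (Finset.range k).erase j₀ := by
          intro x hx
          rw [Finset.mem_erase, Finset.mem_range]
          exact ⟨(hAS x hx).2, dsc_fst0 hk ht (f x).val (hAS x hx).1⟩
        have hlt : ((Finset.range k).erase j₀).card < S.card := by
          rw [Finset.card_erase_of_mem (Finset.mem_range.mpr hj₀k), Finset.card_range, hcardS]
          omega
        obtain ⟨x, hxS, y, hyS, hxy, hEq⟩ :=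
          Finset.exists_ne_map_eq_of_card_lt_of_maps_to hlt hmaps
        rw [hmem] at hxS hyS
        apply oneA ((D x).2) x y (fun h => hxy (Fin.val_injective h)) (by omega) (by omega)
        · exact Prod.ext (hAS x (by rw [hmem]; omega)).1 rfl
        · exact Prod.ext (hAS y (by rw [hmem]; omega)).1 (by rw [hEq])
    have hx₀v := x₀.isLt
    set u₀ := min x₀.val (n - (k+1)) with hu₀
    have base : W u₀ := ⟨x₀, by omega, by omega, Prod.ext hx₀ rfl⟩
    have up : ∀ m, u₀ + m + k < n → W (u₀ + m) := by
      intro m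
      induction m with
      | zero => intro _; exact base
      | succ m ih =>
        intro h
        have e : u₀ + (m+1) = (u₀ + m) + 1 := by omega
        rw [e]
        exact stepup (u₀+m) (by omega) (ih (by omega))
    have down : ∀ m, m ≤ u₀ → W (u₀ - m) := by
      intro m
      induction m with
      | zero => intro _; exact base
      | succ m ih =>
        intro h
        have hval : u₀ + k < n := by omega
        have e : (u₀ - (m+1)) + 1 = u₀ - m := by omega
        apply stepdown (u₀ - (m+1)) (by omega)
        rw [e]
        exact ih (by omega)
    have allW : ∀ u, u + k < n → W u := by
      intro u hu
      rcases le_or_gt u₀ u with h | h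
      · have e : u = u₀ + (u - u₀) := by omega
        rw [e]; exact up _ (by omega)
      · have e : u = u₀ - (u₀ - u) := by omega
        rw [e]; exact down _ (by omega)
    have hall : ∀ v : Fin n, D v = (1, j₀) ∨ ((D v).1 = 0 ∧ (D v).2 ≠ j₀) := by
      intro v
      have hv := v.isLt
      have hu : min v.val (n - (k+1)) + k < n := by omega
      exact wconc _ (allW _ hu) v (by omega) (by omega)
    -- counting
    have c1 : (Finset.univ.filter (fun v : Fin n => D v = (1,j₀))).card ≤ 2*t-1 := by
      apply card_pre_le f hf _ (k*(k*t-1) + j₀*(2*t-1)) (2*t-1)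
      intro v hv
      rcases dsc_spec k t hk ht (f v).val with ⟨i,hi,he,hl,hr⟩|⟨j,hj,he,hl,hr⟩|⟨he,hl⟩ <;>
        rw [hDd] at he
      · rw [hv] at he; simp at he
      · rw [hv] at he
        simp only [Prod.mk.injEq] at he
        rw [he.2]
        omega
      · rw [hv] at he; simp at he
    have cA : ∀ i : ℕ, (Finset.univ.filter (fun v : Fin n => D v = (0,i))).card ≤ t := by
      intro i
      apply card_indep_le k t n hn
      intro u v hu hv hne hdist
      exact oneA i u v (fun h => hne (Fin.val_injective h))
        (by have := distle_inv hdist; omega) (by have := distle_inv hdist; omega) hu hv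
    have cover : (Finset.univ : Finset (Fin n)) ⊆
        (Finset.univ.filter (fun v : Fin n => D v = (1,j₀))) ∪
        (((Finset.range k).erase j₀).biUnion
          (fun i => Finset.univ.filter (fun v : Fin n => D v = (0,i)))) := by
      intro v _
      rw [Finset.mem_union, Finset.mem_biUnion]
      rcases hall v with h | h
      · exact Or.inl (by rw [Finset.mem_filter]; exact ⟨Finset.mem_univ v, h⟩)
      · refine Or.inr ⟨(D v).2, ?_, ?_⟩
        · rw [Finset.mem_erase, Finset.mem_range]
          exact ⟨h.2, dsc_fst0 hk ht (f v).val h.1⟩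
        · rw [Finset.mem_filter]
          exact ⟨Finset.mem_univ v, Prod.ext h.1 rfl⟩
    have hsum : (((Finset.range k).erase j₀).biUnion
        (fun i => Finset.univ.filter (fun v : Fin n => D v = (0,i)))).card ≤ (k-1) * t := by
      calc _ ≤ ∑ i ∈ (Finset.range k).erase j₀,
            (Finset.univ.filter (fun v : Fin n => D v = (0,i))).card :=
          Finset.card_biUnion_le
      _ ≤ ((Finset.range k).erase j₀).card • t :=
          Finset.sum_le_card_nsmul _ _ t (fun i _ => cA i)
      _ = (k-1) * t := by
          rw [Finset.card_erase_of_mem (Finset.mem_range.mpr hj₀k), Finset.card_range,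
            smul_eq_mul]
    have hcard : n ≤ (2*t-1) + (k-1)*t := by
      calc n = (Finset.univ : Finset (Fin n)).card := by simp
      _ ≤ _ := Finset.card_le_card cover
      _ ≤ _ := Finset.card_union_le _ _
      _ ≤ (2*t-1) + (k-1)*t := add_le_add c1 hsum
    have he : (k+1)*t = k*t + t := by ring
    have e2 : (k-1)*t + 1*t = ((k-1)+1)*t := (add_mul _ _ _).symm
    have e3 : (k-1)+1 = k := by omega
    rw [e3] at e2
    omega
  · push_neg at hC
    have cY : (Finset.univ.filter (fun v : Fin n => (D v).1 = 2)).card ≤ t-1 := by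
      apply card_pre_le f hf _ (k*(k*t-1) + k*(2*t-1)) (t-1)
      intro v hv
      rcases dsc_spec k t hk ht (f v).val with ⟨i,hi,he,hl,hr⟩|⟨j,hj,he,hl,hr⟩|⟨he,hl⟩ <;>
        rw [hDd] at he
      · rw [he] at hv; simp at hv
      · rw [he] at hv; simp at hv
      · have := (f v).isLt
        exact ⟨hl, by omega⟩
    have cA : ∀ i : ℕ, (Finset.univ.filter (fun v : Fin n => D v = (0,i))).card ≤ t := by
      intro i
      apply card_indep_le k t n hn
      intro u v hu hv hne hdist
      exact oneA i u v (fun h => hne (Fin.val_injective h))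
        (by have := distle_inv hdist; omega) (by have := distle_inv hdist; omega) hu hv
    have cover : (Finset.univ : Finset (Fin n)) ⊆
        ((Finset.range k).biUnion
          (fun i => Finset.univ.filter (fun v : Fin n => D v = (0,i)))) ∪
        (Finset.univ.filter (fun v : Fin n => (D v).1 = 2)) := by
      intro v _
      rw [Finset.mem_union, Finset.mem_biUnion]
      rcases dsc_spec k t hk ht (f v).val with ⟨i,hi,he,hl,hr⟩|⟨j,hj,he,hl,hr⟩|⟨he,hl⟩ <;>
        rw [hDd] at he
      · exact Or.inl ⟨i, Finset.mem_range.mpr hi, by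
          rw [Finset.mem_filter]; exact ⟨Finset.mem_univ v, he⟩⟩
      · exact absurd (by rw [he]) (hC v)
      · exact Or.inr (by rw [Finset.mem_filter]; exact ⟨Finset.mem_univ v, by rw [he]⟩)
    have hsum : ((Finset.range k).biUnion
        (fun i => Finset.univ.filter (fun v : Fin n => D v = (0,i)))).card ≤ k * t := by
      calc _ ≤ ∑ i ∈ Finset.range k,
            (Finset.univ.filter (fun v : Fin n => D v = (0,i))).card :=
          Finset.card_biUnion_le
      _ ≤ (Finset.range k).card • t := Finset.sum_le_card_nsmul _ _ t (fun i _ => cA i)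
      _ = k * t := by rw [Finset.card_range, smul_eq_mul]
    have hcard : n ≤ k*t + (t-1) := by
      calc n = (Finset.univ : Finset (Fin n)).card := by simp
      _ ≤ _ := Finset.card_le_card cover
      _ ≤ _ := Finset.card_union_le _ _
      _ ≤ k*t + (t-1) := add_le_add hsum cY
    have he : (k+1)*t = k*t + t := by ring
    omega

end RPL
namespace RPL

theorem clique_ramsey (m : ℕ) : ∀ (s u : ℕ) (V : Type) [DecidableEq V] [Fintype V]
    (G : SimpleGraph V) [DecidableRel G.Adj], s + u ≤ m →
    (s+u).choose s ≤ Fintype.card V →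
    (∃ S : Finset V, S.card = s ∧ ∀ x ∈ S, ∀ y ∈ S, x ≠ y → G.Adj x y) ∨
    (∃ S : Finset V, S.card = u ∧ ∀ x ∈ S, ∀ y ∈ S, x ≠ y → ¬ G.Adj x y) := by
  induction m with
  | zero =>
    intro s u V _ _ G _ hsu _
    have hs : s = 0 := by omega
    subst hs
    exact Or.inl ⟨∅, Finset.card_empty, by intro x hx; simp at hx⟩
  | succ m ih =>
    intro s u V _ _ G _ hsu hcard
    match s, u with
    | 0, u =>
      exact Or.inl ⟨∅, Finset.card_empty, by intro x hx; simp at hx⟩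
    | s+1, 0 =>
      exact Or.inr ⟨∅, Finset.card_empty, by intro x hx; simp at hx⟩
    | s+1, u+1 =>
      have hpos : 0 < Fintype.card V := by
        have := Nat.choose_pos (n := s+1+(u+1)) (k := s+1) (by omega)
        omega
      obtain ⟨v⟩ : Nonempty V := Fintype.card_pos_iff.mp hpos
      classical
      obtain ⟨NB, hNB⟩ : ∃ NB : Finset V, NB = G.neighborFinset v := ⟨_, rfl⟩
      obtain ⟨MB, hMB⟩ : ∃ MB : Finset V, MB = Finset.univ \ insert v NB := ⟨_, rfl⟩
      have hNBadj : ∀ x, x ∈ NB → G.Adj v x := by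
        intro x hx
        rw [hNB, SimpleGraph.mem_neighborFinset] at hx
        exact hx
      have hvNB : v ∉ NB := by
        rw [hNB, SimpleGraph.mem_neighborFinset]
        exact G.irrefl
      have hcards : NB.card + MB.card + 1 = Fintype.card V := by
        have h1 : (insert v NB).card = NB.card + 1 := Finset.card_insert_of_notMem hvNB
        have h2 : MB.card = Fintype.card V - (NB.card + 1) := by
          rw [hMB, Finset.card_sdiff_of_subset (Finset.subset_univ _), Finset.card_univ, h1]
        have h3 : (insert v NB).card ≤ Fintype.card V := by
          rw [← Finset.card_univ]
          exact Finset.card_le_card (Finset.subset_univ _)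
        omega
      have hsplit : (s+1+(u+1)).choose (s+1)
          = (s+(u+1)).choose s + ((s+1)+u).choose (s+1) := by
        have e1 : s+1+(u+1) = (s+1+u)+1 := by omega
        rw [e1, Nat.choose_succ_succ']
        have e2 : s+1+u = s+(u+1) := by omega
        have e3 : s+1+u = (s+1)+u := by omega
        rw [← e2, ← e3]
      have key : (s+(u+1)).choose s ≤ NB.card ∨ ((s+1)+u).choose (s+1) ≤ MB.card := by
        by_contra hno
        push_neg at hno
        omega
      rcases key with hN | hM
      · -- recurse in neighbourhood with (s, u+1)
        have hrec := ih s (u+1) ↥(NB : Finset V) (G.comap (Subtype.val : ↥NB → V))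
          (by omega) (by rw [Fintype.card_coe]; exact hN)
        rcases hrec with ⟨S', hS1, hS2⟩ | ⟨S', hS1, hS2⟩
        · left
          refine ⟨insert v (S'.image Subtype.val), ?_, ?_⟩
          · have himg : (S'.image Subtype.val).card = s :=
              (Finset.card_image_of_injective _ Subtype.val_injective).trans hS1
            have hvim : v ∉ S'.image Subtype.val := by
              intro hv
              rw [Finset.mem_image] at hv
              obtain ⟨w, _, hw⟩ := hv
              have : (w : V) ∈ NB := w.2
              rw [hw] at this
              exact hvNB this
            rw [Finset.card_insert_of_notMem hvim, himg]
          · intro x hx y hy hxy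
            rw [Finset.mem_insert] at hx hy
            rcases hx with rfl | hx
            · rcases hy with rfl | hy
              · exact absurd rfl hxy
              · rw [Finset.mem_image] at hy
                obtain ⟨w, _, rfl⟩ := hy
                exact hNBadj _ w.2
            · rcases hy with rfl | hy
              · rw [Finset.mem_image] at hx
                obtain ⟨w, _, rfl⟩ := hx
                exact (hNBadj _ w.2).symm
              · rw [Finset.mem_image] at hx hy
                obtain ⟨w1, hw1, rfl⟩ := hx
                obtain ⟨w2, hw2, rfl⟩ := hy
                exact hS2 w1 hw1 w2 hw2 (fun h => hxy (congrArg Subtype.val h))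
        · right
          refine ⟨S'.image Subtype.val, ?_, ?_⟩
          · exact (Finset.card_image_of_injective _ Subtype.val_injective).trans hS1
          · intro x hx y hy hxy
            rw [Finset.mem_image] at hx hy
            obtain ⟨w1, hw1, rfl⟩ := hx
            obtain ⟨w2, hw2, rfl⟩ := hy
            exact hS2 w1 hw1 w2 hw2 (fun h => hxy (congrArg Subtype.val h))
      · -- recurse in non-neighbourhood with (s+1, u)
        have hrec := ih (s+1) u ↥(MB : Finset V) (G.comap (Subtype.val : ↥MB → V))
          (by omega) (by rw [Fintype.card_coe]; exact hM)
        rcases hrec with ⟨S', hS1, hS2⟩ | ⟨S', hS1, hS2⟩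
        · left
          refine ⟨S'.image Subtype.val, ?_, ?_⟩
          · exact (Finset.card_image_of_injective _ Subtype.val_injective).trans hS1
          · intro x hx y hy hxy
            rw [Finset.mem_image] at hx hy
            obtain ⟨w1, hw1, rfl⟩ := hx
            obtain ⟨w2, hw2, rfl⟩ := hy
            exact hS2 w1 hw1 w2 hw2 (fun h => hxy (congrArg Subtype.val h))
        · right
          have hMBprop : ∀ x : V, x ∈ MB → x ≠ v ∧ ¬ G.Adj v x := by
            intro x hx
            rw [hMB, Finset.mem_sdiff, Finset.mem_insert] at hx
            push_neg at hx
            refine ⟨hx.2.1, fun h => hx.2.2 ?_⟩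
            rw [hNB, SimpleGraph.mem_neighborFinset]
            exact h
          refine ⟨insert v (S'.image Subtype.val), ?_, ?_⟩
          · have himg : (S'.image Subtype.val).card = u :=
              (Finset.card_image_of_injective _ Subtype.val_injective).trans hS1
            have hvim : v ∉ S'.image Subtype.val := by
              intro hv
              rw [Finset.mem_image] at hv
              obtain ⟨w, _, hw⟩ := hv
              exact (hMBprop w w.2).1 hw
            rw [Finset.card_insert_of_notMem hvim, himg]
          · intro x hx y hy hxy
            rw [Finset.mem_insert] at hx hy
            rcases hx with rfl | hx
            · rcases hy with rfl | hy
              · exact absurd rfl hxy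
              · rw [Finset.mem_image] at hy
                obtain ⟨w, _, rfl⟩ := hy
                exact (hMBprop w w.2).2
            · rcases hy with rfl | hy
              · rw [Finset.mem_image] at hx
                obtain ⟨w, _, rfl⟩ := hx
                exact fun h => (hMBprop w w.2).2 h.symm
              · rw [Finset.mem_image] at hx hy
                obtain ⟨w1, hw1, rfl⟩ := hx
                obtain ⟨w2, hw2, rfl⟩ := hy
                exact hS2 w1 hw1 w2 hw2 (fun h => hxy (congrArg Subtype.val h))

end RPL

namespace RPL

lemma arith (k t : ℕ) (hk : 2 ≤ k) (ht : 1 ≤ t) :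
    k*(k*t-1) + k*(2*t-1) + (t-1) + 1 = t*(k+1)^2 - 2*k := by
  have hkt : 2 ≤ k*t := le_trans hk (Nat.le_mul_of_pos_right k ht)
  obtain ⟨s, hs⟩ : ∃ s, k*t = s+1 := ⟨k*t-1, by omega⟩
  obtain ⟨r, hr⟩ : ∃ r, t = r+1 := ⟨t-1, by omega⟩
  have p1 : k*(k*t-1) = k*s := by rw [hs, Nat.add_sub_cancel]
  have p2 : k*(2*t-1) = 2*(k*r) + k := by
    rw [hr]
    have h1 : 2*(r+1)-1 = 2*r+1 := by omega
    rw [h1]; ring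
  have p4 : t*(k+1)^2 = k*(k*t) + 2*(k*t) + t := by ring
  have p5 : k*(k*t) = k*s + k := by rw [hs]; ring
  have hsr : s + 1 = k*r + k := by rw [← hs, hr]; ring
  omega

lemma embeds_of_clique {nv N : ℕ} (G : SimpleGraph (Fin nv)) (R : SimpleGraph (Fin N))
    (S : Finset (Fin N)) (hS : S.card = nv)
    (hcl : ∀ x ∈ S, ∀ y ∈ S, x ≠ y → R.Adj x y) :
    Embeds G R := by
  refine ⟨fun i => (S.orderIsoOfFin hS i).val, ?_, ?_⟩
  · intro a b hab
    exact (S.orderIsoOfFin hS).injective (Subtype.val_injective hab)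
  · intro a b hadj
    have hne : a ≠ b := G.ne_of_adj hadj
    apply hcl _ (S.orderIsoOfFin hS a).2 _ (S.orderIsoOfFin hS b).2
    intro h
    exact hne ((S.orderIsoOfFin hS).injective (Subtype.val_injective h))

lemma ramsey_prop_exists {nv : ℕ} (G : SimpleGraph (Fin nv)) :
    RamseyProp G G ((nv + nv).choose nv) := by
  intro R
  haveI : DecidableRel R.Adj := Classical.decRel _
  have hcr := clique_ramsey (nv+nv) nv nv (Fin ((nv+nv).choose nv)) R (le_refl _)
      (by rw [Fintype.card_fin])
  rcases hcr with ⟨S, hS, hcl⟩ | ⟨S, hS, hcl⟩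
  · exact Or.inl (embeds_of_clique G R S hS hcl)
  · refine Or.inr (embeds_of_clique G Rᶜ S hS ?_)
    intro x hx y hy hxy
    rw [SimpleGraph.compl_adj]
    exact ⟨hxy, hcl x hx y hy hxy⟩

end RPL

/-- Lower bounds `R(C^k_{(k+1)t}, C^k_{(k+1)t}) ≥ t(k+1)² − 2k` and likewise for paths. -/
theorem ramsey_power_lower (k t : ℕ) (hk : 2 ≤ k) (ht : 1 ≤ t) :
    t * (k+1)^2 - 2*k ≤
      ramseyNumber (cyclePower ((k+1)*t) k) (cyclePower ((k+1)*t) k) ∧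
    t * (k+1)^2 - 2*k ≤
      ramseyNumber (pathPower ((k+1)*t) k) (pathPower ((k+1)*t) k) := by
  have harith := RPL.arith k t hk ht
  constructor
  · apply le_csInf
    · exact ⟨((k+1)*t + (k+1)*t).choose ((k+1)*t), RPL.ramsey_prop_exists _⟩
    · intro b hb
      by_contra hlt
      push_neg at hlt
      have hble : b ≤ k*(k*t-1) + k*(2*t-1) + (t-1) := by omega
      rcases hb (RPL.RedG k t b) with ⟨f, hf, hadj⟩ | ⟨f, hf, hadj⟩
      · exact RPL.red_free k t ((k+1)*t) b hk ht rfl hble f hf (fun u v hne hd =>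
          (hadj u v ⟨hne, le_trans (min_le_left _ _) hd⟩).2)
      · refine RPL.blue_free k t ((k+1)*t) b hk ht rfl hble f hf (fun u v hne hd => ?_)
        have h := hadj u v ⟨hne, le_trans (min_le_left _ _) hd⟩
        rw [SimpleGraph.compl_adj] at h
        intro hred
        exact h.2 ⟨h.1, hred⟩
  · apply le_csInf
    · exact ⟨((k+1)*t + (k+1)*t).choose ((k+1)*t), RPL.ramsey_prop_exists _⟩
    · intro b hb
      by_contra hlt
      push_neg at hlt
      have hble : b ≤ k*(k*t-1) + k*(2*t-1) + (t-1) := by omega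
      rcases hb (RPL.RedG k t b) with ⟨f, hf, hadj⟩ | ⟨f, hf, hadj⟩
      · exact RPL.red_free k t ((k+1)*t) b hk ht rfl hble f hf (fun u v hne hd =>
          (hadj u v ⟨hne, hd⟩).2)
      · refine RPL.blue_free k t ((k+1)*t) b hk ht rfl hble f hf (fun u v hne hd => ?_)
        have h := hadj u v ⟨hne, hd⟩
        rw [SimpleGraph.compl_adj] at h
        intro hred
        exact h.2 ⟨h.1, hred⟩
end

section
/- Fix k ≥ 2 and t ≥ 1, and let n = (k+1)t. Partition a vertex set of size t(k+1)² − 2k − 1 into sets A_1,…,A_k of size kt−1 each, B_1,…,B_k of size 2t−1 each, and C of size t−1. Colour edges: red inside each A_i, blue inside each B_i, blue between distinct A_i and A_j, red between distinct B_i and B_j, red between A_i and B_i for each i, blue between A_i and B_j for i ≠ j, blue between C and each A_i, red between C and each B_i, and arbitrarily inside C. Then this two-coloured complete graph contains no red copy of P_n^k. -/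
open SimpleGraph Finset

private lemma dist_of_div_eq {k a b : ℕ} (h : a / (k+1) = b / (k+1)) : Nat.dist a b ≤ k := by
  have h1 := Nat.div_add_mod a (k+1)
  have h2 := Nat.div_add_mod b (k+1)
  rw [h] at h1
  have h3 : a % (k+1) < k+1 := Nat.mod_lt _ (Nat.succ_pos k)
  have h4 : b % (k+1) < k+1 := Nat.mod_lt _ (Nat.succ_pos k)
  set X := (k+1) * (b / (k+1))
  simp only [Nat.dist]
  omega

/-- The explicit colouring in the proof of the lower bound contains no red `P_n^k`.
The vertex set is partitioned (via the labelling `L`) into sets `A_1,…,A_k` of size `kt−1`,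
`B_1,…,B_k` of size `2t−1` and `C` of size `t−1`, with colours as in the construction. -/
theorem lower_bound_construction {V : Type} [Fintype V] (k t : ℕ) (hk : 2 ≤ k) (ht : 1 ≤ t)
    (R : SimpleGraph V) (L : V → Fin k ⊕ Fin k ⊕ Unit)
    (hcard : Fintype.card V = t * (k+1)^2 - 2*k - 1)
    (hA : ∀ i : Fin k, Nat.card {v // L v = Sum.inl i} = k*t - 1)
    (hB : ∀ i : Fin k, Nat.card {v // L v = Sum.inr (Sum.inl i)} = 2*t - 1)
    (hC : Nat.card {v // L v = Sum.inr (Sum.inr ())} = t - 1)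
    (hredA : ∀ u v (i : Fin k), L u = Sum.inl i → L v = Sum.inl i → u ≠ v → R.Adj u v)
    (hblueB : ∀ u v (i : Fin k), L u = Sum.inr (Sum.inl i) → L v = Sum.inr (Sum.inl i) →
      ¬ R.Adj u v)
    (hblueAA : ∀ u v (i j : Fin k), i ≠ j → L u = Sum.inl i → L v = Sum.inl j → ¬ R.Adj u v)
    (hredBB : ∀ u v (i j : Fin k), i ≠ j → L u = Sum.inr (Sum.inl i) →
      L v = Sum.inr (Sum.inl j) → R.Adj u v)
    (hredAB : ∀ u v (i : Fin k), L u = Sum.inl i → L v = Sum.inr (Sum.inl i) → R.Adj u v)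
    (hblueAB : ∀ u v (i j : Fin k), i ≠ j → L u = Sum.inl i → L v = Sum.inr (Sum.inl j) →
      ¬ R.Adj u v)
    (hblueCA : ∀ u v (i : Fin k), L u = Sum.inr (Sum.inr ()) → L v = Sum.inl i → ¬ R.Adj u v)
    (hredCB : ∀ u v (i : Fin k), L u = Sum.inr (Sum.inr ()) → L v = Sum.inr (Sum.inl i) →
      R.Adj u v) :
    ¬ Embeds (pathPower ((k+1)*t) k) R := by
  rintro ⟨f, hinj, hf⟩
  have hk1 : 0 < k + 1 := Nat.succ_pos k
  have adj : ∀ a b : Fin ((k+1)*t), a ≠ b → Nat.dist a.val b.val ≤ k →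
      R.Adj (f a) (f b) := by
    intro a b hab hd
    exact hf a b ⟨hab, hd⟩
  -- fiber cardinality bound from injectivity of f
  have fib : ∀ c : Fin k ⊕ Fin k ⊕ Unit,
      (univ.filter (fun a : Fin ((k+1)*t) => L (f a) = c)).card ≤ Nat.card {v // L v = c} := by
    intro c
    have h1 : Nat.card {a : Fin ((k+1)*t) // L (f a) = c} ≤ Nat.card {v // L v = c} :=
      Nat.card_le_card_of_injective (fun a => ⟨f a.1, a.2⟩)
        (fun a b hab => Subtype.ext (hinj (by simpa using congrArg Subtype.val hab)))
    simpa [Nat.card_eq_fintype_card, Fintype.card_subtype] using h1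
  -- indices mapping into B_i are ≥ k+1 apart, hence at most t of them
  have spacing : ∀ i : Fin k,
      (univ.filter (fun a : Fin ((k+1)*t) => L (f a) = Sum.inr (Sum.inl i))).card ≤ t := by
    intro i
    have h1 : (univ.filter (fun a : Fin ((k+1)*t) => L (f a) = Sum.inr (Sum.inl i))).card
        ≤ (Finset.range t).card := by
      apply Finset.card_le_card_of_injOn (fun a => a.val / (k+1))
      · intro a _
        simp only [Finset.mem_coe, Finset.mem_range]
        exact (Nat.div_lt_iff_lt_mul hk1).2 (by rw [mul_comm t (k+1)]; exact a.isLt)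
      · intro a ha b hb hab
        by_contra hne
        have haB := (Finset.mem_filter.1 ha).2
        have hbB := (Finset.mem_filter.1 hb).2
        exact hblueB (f a) (f b) i haB hbB (adj a b hne (dist_of_div_eq hab))
    simpa using h1
  -- neighbours of an A_i vertex lie in A_i ∪ B_i
  have nbhd : ∀ (i : Fin k) (a b : Fin ((k+1)*t)), L (f a) = Sum.inl i → a ≠ b →
      Nat.dist a.val b.val ≤ k →
      L (f b) = Sum.inl i ∨ L (f b) = Sum.inr (Sum.inl i) := by
    intro i a b ha hne hd
    have red := adj a b hne hd
    rcases hb : L (f b) with j | j | u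
    · rcases eq_or_ne j i with rfl | hji
      · exact Or.inl rfl
      · exact absurd red (hblueAA (f a) (f b) i j (Ne.symm hji) ha hb)
    · rcases eq_or_ne j i with rfl | hji
      · exact Or.inr rfl
      · exact absurd red (hblueAB (f a) (f b) i j (Ne.symm hji) ha hb)
    · exact absurd red.symm (hblueCA (f b) (f a) i hb ha)
  have hcardn : (univ : Finset (Fin ((k+1)*t))).card = (k+1)*t := by simp
  by_cases hex : ∃ (a : Fin ((k+1)*t)) (i : Fin k), L (f a) = Sum.inl i
  · -- some vertex lands in some A_i : everything lands in A_i ∪ B_i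
    obtain ⟨a0, i, ha0⟩ := hex
    have step_up : ∀ m : ℕ, m + 1 < (k+1)*t →
        (∃ a : Fin ((k+1)*t), Nat.dist a.val m ≤ k ∧ L (f a) = Sum.inl i) →
        (∃ a : Fin ((k+1)*t), Nat.dist a.val (m+1) ≤ k ∧ L (f a) = Sum.inl i) := by
      rintro m hm ⟨a, hd, ha⟩
      by_cases h : Nat.dist a.val (m+1) ≤ k
      · exact ⟨a, h, ha⟩
      · have hav : a.val + k = m := by simp only [Nat.dist] at hd h ⊢; omega
        have hlt1 : a.val + 1 < (k+1)*t := by omega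
        have hlt2 : a.val + 2 < (k+1)*t := by omega
        have hne1 : a ≠ ⟨a.val + 1, hlt1⟩ :=
          Fin.ne_of_val_ne (show a.val ≠ a.val + 1 by omega)
        have hne2 : a ≠ ⟨a.val + 2, hlt2⟩ :=
          Fin.ne_of_val_ne (show a.val ≠ a.val + 2 by omega)
        have hd1 : Nat.dist a.val (a.val + 1) ≤ k := by simp only [Nat.dist]; omega
        have hd2 : Nat.dist a.val (a.val + 2) ≤ k := by simp only [Nat.dist]; omega
        rcases nbhd i a ⟨a.val + 1, hlt1⟩ ha hne1 hd1 with h1 | h1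
        · exact ⟨⟨a.val + 1, hlt1⟩, by simp only [Nat.dist]; omega, h1⟩
        · rcases nbhd i a ⟨a.val + 2, hlt2⟩ ha hne2 hd2 with h2 | h2
          · exact ⟨⟨a.val + 2, hlt2⟩, by simp only [Nat.dist]; omega, h2⟩
          · exfalso
            have hne12 : (⟨a.val + 1, hlt1⟩ : Fin ((k+1)*t)) ≠ ⟨a.val + 2, hlt2⟩ :=
              Fin.ne_of_val_ne (show a.val + 1 ≠ a.val + 2 by omega)
            exact hblueB _ _ i h1 h2
              (adj _ _ hne12 (by simp only [Nat.dist]; omega))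
    have step_down : ∀ m : ℕ,
        (∃ a : Fin ((k+1)*t), Nat.dist a.val (m+1) ≤ k ∧ L (f a) = Sum.inl i) →
        (∃ a : Fin ((k+1)*t), Nat.dist a.val m ≤ k ∧ L (f a) = Sum.inl i) := by
      rintro m ⟨a, hd, ha⟩
      by_cases h : Nat.dist a.val m ≤ k
      · exact ⟨a, h, ha⟩
      · have hav : a.val = m + k + 1 := by simp only [Nat.dist] at hd h ⊢; omega
        have hlt1 : a.val - 1 < (k+1)*t := by omega
        have hlt2 : a.val - 2 < (k+1)*t := by omega
        have hne1 : a ≠ ⟨a.val - 1, hlt1⟩ :=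
          Fin.ne_of_val_ne (show a.val ≠ a.val - 1 by omega)
        have hne2 : a ≠ ⟨a.val - 2, hlt2⟩ :=
          Fin.ne_of_val_ne (show a.val ≠ a.val - 2 by omega)
        have hd1 : Nat.dist a.val (a.val - 1) ≤ k := by simp only [Nat.dist]; omega
        have hd2 : Nat.dist a.val (a.val - 2) ≤ k := by simp only [Nat.dist]; omega
        rcases nbhd i a ⟨a.val - 1, hlt1⟩ ha hne1 hd1 with h1 | h1
        · exact ⟨⟨a.val - 1, hlt1⟩, by simp only [Nat.dist]; omega, h1⟩
        · rcases nbhd i a ⟨a.val - 2, hlt2⟩ ha hne2 hd2 with h2 | h2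
          · exact ⟨⟨a.val - 2, hlt2⟩, by simp only [Nat.dist]; omega, h2⟩
          · exfalso
            have hne12 : (⟨a.val - 1, hlt1⟩ : Fin ((k+1)*t)) ≠ ⟨a.val - 2, hlt2⟩ :=
              Fin.ne_of_val_ne (show a.val - 1 ≠ a.val - 2 by omega)
            exact hblueB _ _ i h1 h2
              (adj _ _ hne12 (by simp only [Nat.dist]; omega))
    have up : ∀ d : ℕ, a0.val + d < (k+1)*t →
        (∃ a : Fin ((k+1)*t), Nat.dist a.val (a0.val + d) ≤ k ∧ L (f a) = Sum.inl i) := by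
      intro d
      induction d with
      | zero => intro _; exact ⟨a0, by simp, ha0⟩
      | succ d ih =>
        intro hd
        exact step_up (a0.val + d) (by omega) (ih (by omega))
    have down : ∀ d : ℕ, d ≤ a0.val →
        (∃ a : Fin ((k+1)*t), Nat.dist a.val (a0.val - d) ≤ k ∧ L (f a) = Sum.inl i) := by
      intro d
      induction d with
      | zero => intro _; exact ⟨a0, by simp, ha0⟩
      | succ d ih =>
        intro hd
        have h1 : a0.val - d = (a0.val - (d+1)) + 1 := by omega
        exact step_down _ (h1 ▸ ih (by omega))
    have claim : ∀ j : Fin ((k+1)*t),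
        L (f j) = Sum.inl i ∨ L (f j) = Sum.inr (Sum.inl i) := by
      intro j
      have hNj : ∃ a : Fin ((k+1)*t), Nat.dist a.val j.val ≤ k ∧ L (f a) = Sum.inl i := by
        rcases le_or_gt a0.val j.val with h | h
        · have := up (j.val - a0.val) (by omega)
          rwa [Nat.add_sub_cancel' h] at this
        · have := down (a0.val - j.val) (by omega)
          rwa [Nat.sub_sub_self (le_of_lt h)] at this
      obtain ⟨a, hd, ha⟩ := hNj
      rcases eq_or_ne a j with rfl | hne
      · exact Or.inl ha
      · exact nbhd i a j ha hne hd
    -- counting: (k+1)t ≤ (kt-1) + t, contradiction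
    have hAcard : (univ.filter (fun a : Fin ((k+1)*t) => L (f a) = Sum.inl i)).card
        ≤ k*t - 1 := by
      have := fib (Sum.inl i); rwa [hA i] at this
    have hBcard : (univ.filter (fun a : Fin ((k+1)*t) => ¬ L (f a) = Sum.inl i)).card
        ≤ t := by
      have heq : (univ.filter (fun a : Fin ((k+1)*t) => ¬ L (f a) = Sum.inl i))
          = (univ.filter (fun a : Fin ((k+1)*t) => L (f a) = Sum.inr (Sum.inl i))) := by
        apply Finset.filter_congr
        intro a _
        rcases claim a with h | h <;> simp [h]
      rw [heq]; exact spacing i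
    have hkt : 2 ≤ k * t := le_trans (by omega) (Nat.mul_le_mul hk ht)
    have hexp : (k+1)*t = k*t + t := by ring
    have hfinal : (k+1)*t ≤ (k*t - 1) + t := by
      calc (k+1)*t = (univ : Finset (Fin ((k+1)*t))).card := hcardn.symm
        _ = (univ.filter (fun a : Fin ((k+1)*t) => L (f a) = Sum.inl i)).card
            + (univ.filter (fun a : Fin ((k+1)*t) => ¬ L (f a) = Sum.inl i)).card :=
          (Finset.card_filter_add_card_filter_not
            (p := fun a : Fin ((k+1)*t) => L (f a) = Sum.inl i)).symm
        _ ≤ (k*t - 1) + t := Nat.add_le_add hAcard hBcard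
    omega
  · -- no vertex lands in any A_i
    push_neg at hex
    have hsum := Finset.card_eq_sum_card_fiberwise
      (f := fun a : Fin ((k+1)*t) => L (f a)) (s := univ) (t := univ)
      (fun a _ => Finset.mem_univ _)
    rw [Fintype.sum_sum_type, Fintype.sum_sum_type] at hsum
    beta_reduce at hsum
    have hsum1 : (∑ i : Fin k,
        (univ.filter (fun a : Fin ((k+1)*t) => L (f a) = Sum.inl i)).card) = 0 := by
      apply Finset.sum_eq_zero
      intro i _
      rw [Finset.card_eq_zero, Finset.filter_eq_empty_iff]
      intro a _
      exact hex a i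
    have hsum2 : (∑ i : Fin k,
        (univ.filter (fun a : Fin ((k+1)*t) => L (f a) = Sum.inr (Sum.inl i))).card)
        ≤ k * t := by
      calc (∑ i : Fin k,
          (univ.filter (fun a : Fin ((k+1)*t) => L (f a) = Sum.inr (Sum.inl i))).card)
          ≤ ∑ _i : Fin k, t := Finset.sum_le_sum (fun i _ => spacing i)
        _ = k * t := by simp [Finset.sum_const, mul_comm]
    have hsum3 : (∑ u : Unit,
        (univ.filter (fun a : Fin ((k+1)*t) => L (f a) = Sum.inr (Sum.inr u))).card)
        ≤ t - 1 := by
      have h1 := fib (Sum.inr (Sum.inr ()))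
      rw [hC] at h1
      simpa using h1
    have hfinal : (k+1)*t ≤ 0 + (k*t + (t-1)) := by
      calc (k+1)*t = (univ : Finset (Fin ((k+1)*t))).card := hcardn.symm
        _ = (∑ i : Fin k,
              (univ.filter (fun a : Fin ((k+1)*t) => L (f a) = Sum.inl i)).card)
            + ((∑ i : Fin k,
              (univ.filter (fun a : Fin ((k+1)*t) => L (f a) = Sum.inr (Sum.inl i))).card)
            + (∑ u : Unit,
              (univ.filter (fun a : Fin ((k+1)*t) => L (f a) = Sum.inr (Sum.inr u))).card)) :=
          hsum
        _ ≤ 0 + (k * t + (t-1)) :=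
          Nat.add_le_add hsum1.le (Nat.add_le_add hsum2 hsum3)
    have hkt : 2 ≤ k * t := le_trans (by omega) (Nat.mul_le_mul hk ht)
    have hexp : (k+1)*t = k*t + t := by ring
    omega
end

section
/- For every collection of odd cycle lengths ℓ_1, …, ℓ_r with ℓ_s > 2^s for each s, the homomorphism Ramsey number satisfies R_hom(C_{ℓ_1}, …, C_{ℓ_r}) = 2^r + 1. That is: (a) every r-colouring of the edges of K_{2^r+1} admits some colour i and a graph homomorphism from C_{ℓ_i} into the subgraph of colour i; (b) there is an r-colouring of the edges of K_{2^r} for which no such homomorphism exists for any i. -/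
open SimpleGraph Finset

namespace HomRamseyAux


def WalkFT {V : Type*} (Adj : V → V → Prop) (u v : V) (p : ℕ) : Prop :=
  ∃ w : ℕ → V, w 0 = u ∧ w p = v ∧ ∀ k < p, Adj (w k) (w (k + 1))

lemma walk_refl {V : Type*} (Adj : V → V → Prop) (u : V) : WalkFT Adj u u 0 :=
  ⟨fun _ => u, rfl, rfl, fun k hk => absurd hk (Nat.not_lt_zero k)⟩

lemma walk_single {V : Type*} {Adj : V → V → Prop} {u v : V} (h : Adj u v) :
    WalkFT Adj u v 1 := by
  refine ⟨fun k => if k = 0 then u else v, by simp, by simp, ?_⟩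
  intro k hk
  have : k = 0 := by omega
  subst this
  simpa using h

lemma walk_mono {V : Type*} {A B : V → V → Prop} (h : ∀ a b, A a b → B a b)
    {u v : V} {p : ℕ} (hw : WalkFT A u v p) : WalkFT B u v p := by
  obtain ⟨w, h0, hp, ha⟩ := hw
  exact ⟨w, h0, hp, fun k hk => h _ _ (ha k hk)⟩

lemma walk_symm {V : Type*} {Adj : V → V → Prop} (hs : ∀ a b, Adj a b → Adj b a)
    {u v : V} {p : ℕ} (h : WalkFT Adj u v p) : WalkFT Adj v u p := by
  obtain ⟨w, h0, hp, ha⟩ := h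
  refine ⟨fun k => w (p - k), by simpa using hp, by simpa using h0, fun k hk => ?_⟩
  have h1 := ha (p - (k + 1)) (by omega)
  have e : p - (k + 1) + 1 = p - k := by omega
  rw [e] at h1
  exact hs _ _ h1

lemma walk_trans {V : Type*} {Adj : V → V → Prop} {u v x : V} {p q : ℕ}
    (h1 : WalkFT Adj u v p) (h2 : WalkFT Adj v x q) : WalkFT Adj u x (p + q) := by
  obtain ⟨w1, h10, h1p, h1a⟩ := h1
  obtain ⟨w2, h20, h2q, h2a⟩ := h2
  refine ⟨fun k => if k < p then w1 k else w2 (k - p), ?_, ?_, ?_⟩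
  · by_cases hp : 0 < p
    · simp [hp, h10]
    · have hp0 : p = 0 := by omega
      subst hp0
      simpa [h20] using h1p.symm.trans h10
  · have hlt : ¬ (p + q < p) := by omega
    simp only [if_neg hlt]
    rw [Nat.add_sub_cancel_left, h2q]
  · intro k hk
    by_cases hk1 : k + 1 < p
    · simp only [if_pos (by omega : k < p), if_pos hk1]
      exact h1a k (by omega)
    · by_cases hk2 : k < p
      · have he : k + 1 = p := by omega
        simp only [if_pos hk2, if_neg hk1]
        have e0 : k + 1 - p = 0 := by omega
        rw [e0, h20, ← h1p, ← he]
        exact h1a k (by omega)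
      · simp only [if_neg hk2, if_neg hk1]
        have e : k + 1 - p = (k - p) + 1 := by omega
        rw [e]
        exact h2a (k - p) (by omega)

lemma shorten {V : Type*} [DecidableEq V] {Adj : V → V → Prop} {S : Finset V}
    (hS : ∀ a b, Adj a b → a ∈ S)
    (h : ∃ m, Odd m ∧ ∃ u, WalkFT Adj u u m) :
    ∃ m, Odd m ∧ m ≤ S.card ∧ ∃ u, WalkFT Adj u u m := by
  classical
  have hP : ∃ m, Odd m ∧ ∃ u, WalkFT Adj u u m := h
  obtain ⟨hodd, u, w, h0, hm, ha⟩ := Nat.find_spec hP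
  set m := Nat.find hP with hmdef
  by_cases hle : m ≤ S.card
  · exact ⟨m, hodd, hle, u, w, h0, hm, ha⟩
  exfalso
  push_neg at hle
  have hmpos : 0 < m := hodd.pos
  have hstep : ∀ j < m, Adj (w j) (w ((j + 1) % m)) := by
    intro j hj
    by_cases hj1 : j + 1 < m
    · rw [Nat.mod_eq_of_lt hj1]
      exact ha j hj
    · have e : j + 1 = m := by omega
      have h1 := ha j hj
      rw [e] at h1
      rw [show (j + 1) % m = 0 by rw [e]; exact Nat.mod_self m, h0, ← hm]
      exact h1
  have hmem : ∀ k ∈ Finset.range m, w k ∈ S := fun k hk =>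
    hS _ _ (ha k (Finset.mem_range.mp hk))
  have hcard : S.card < (Finset.range m).card := by simpa using hle
  obtain ⟨a, haR, b, hbR, hab, heq⟩ :=
    Finset.exists_ne_map_eq_of_card_lt_of_maps_to hcard hmem
  rw [Finset.mem_range] at haR hbR
  have key : ∀ a b : ℕ, a < b → b < m → w a = w b → False := by
    intro a b hab hbm heq
    have hm2 : 2 ≤ m := by omega
    -- first closed walk, length b - a
    have hw1 : WalkFT Adj (w a) (w a) (b - a) := by
      refine ⟨fun k => w (a + k), by simp, ?_, ?_⟩
      · show w (a + (b - a)) = w a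
        rw [show a + (b - a) = b from by omega, ← heq]
      · intro k hk
        show Adj (w (a + k)) (w (a + (k + 1)))
        have e : a + (k + 1) = (a + k) + 1 := by omega
        rw [e]
        exact ha (a + k) (by omega)
    -- second closed walk, length m - (b - a)
    have hw2 : WalkFT Adj (w b) (w b) (m - (b - a)) := by
      refine ⟨fun k => w ((b + k) % m), by simp [Nat.mod_eq_of_lt hbm], ?_, ?_⟩
      · show w ((b + (m - (b - a))) % m) = w b
        rw [show (b + (m - (b - a))) % m = a from by
          rw [show b + (m - (b - a)) = m + a from by omega, Nat.add_mod_left,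
            Nat.mod_eq_of_lt (by omega)]]
        rw [heq]
      · intro k hk
        show Adj (w ((b + k) % m)) (w ((b + (k + 1)) % m))
        rw [show b + (k + 1) = b + k + 1 from by omega]
        have h1 := hstep ((b + k) % m) (Nat.mod_lt _ hmpos)
        have e : ((b + k) % m + 1) % m = (b + k + 1) % m := by
          conv_rhs => rw [Nat.add_mod (b + k) 1 m]
          rw [Nat.mod_eq_of_lt (show (1:ℕ) < m by omega)]
        rw [e] at h1
        exact h1
    have hsum : (b - a) + (m - (b - a)) = m := by omega
    have hoddcase : Odd (b - a) ∨ Odd (m - (b - a)) := by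
      rw [Nat.odd_iff] at hodd ⊢
      rw [Nat.odd_iff]
      omega
    rcases hoddcase with ho | ho
    · exact Nat.find_min hP (show b - a < m by omega) ⟨ho, w a, hw1⟩
    · exact Nat.find_min hP (show m - (b - a) < m by omega) ⟨ho, w b, hw2⟩
  rcases lt_or_gt_of_ne hab with hlt | hlt
  · exact key a b hlt hbR heq
  · exact key b a hlt haR heq.symm

lemma min'_congr {α : Type*} [LinearOrder α] {s t : Finset α} (h : s = t)
    (hs : s.Nonempty) (ht : t.Nonempty) : s.min' hs = t.min' ht := by
  subst h; rfl

lemma two_color {V : Type*} [Fintype V] [LinearOrder V] {Adj : V → V → Prop}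
    (hs : ∀ a b, Adj a b → Adj b a)
    (h : ¬ ∃ m, Odd m ∧ ∃ u, WalkFT Adj u u m) :
    ∃ g : V → Bool, ∀ x y, Adj x y → g x ≠ g y := by
  classical
  have hpar : ∀ u v p q, WalkFT Adj u v p → WalkFT Adj u v q → p % 2 = q % 2 := by
    intro u v p q hp hq
    by_contra hne
    exact h ⟨p + q, by rw [Nat.odd_iff]; omega, u, walk_trans hp (walk_symm hs hq)⟩
  have hne : ∀ v : V, (Finset.univ.filter (fun x => ∃ p, WalkFT Adj v x p)).Nonempty :=
    fun v => ⟨v, by simp; exact ⟨0, walk_refl Adj v⟩⟩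
  set root : V → V := fun v => (Finset.univ.filter (fun x => ∃ p, WalkFT Adj v x p)).min' (hne v)
    with hrootdef
  have hroot_reach : ∀ v, ∃ p, WalkFT Adj v (root v) p := by
    intro v
    have := Finset.min'_mem (Finset.univ.filter (fun x => ∃ p, WalkFT Adj v x p)) (hne v)
    simpa using this
  have hroot_eq : ∀ x y, Adj x y → root x = root y := by
    intro x y hxy
    have hfil : (Finset.univ.filter (fun z => ∃ p, WalkFT Adj x z p))
        = (Finset.univ.filter (fun z => ∃ p, WalkFT Adj y z p)) := by
      ext z
      simp only [Finset.mem_filter, Finset.mem_univ, true_and]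
      constructor
      · rintro ⟨p, hp⟩
        exact ⟨1 + p, walk_trans (walk_single (hs _ _ hxy)) hp⟩
      · rintro ⟨p, hp⟩
        exact ⟨1 + p, walk_trans (walk_single hxy) hp⟩
    exact min'_congr hfil (hne x) (hne y)
  refine ⟨fun v => if ∃ p, Odd p ∧ WalkFT Adj (root v) v p then true else false, ?_⟩
  intro x y hxy heq
  have hre := hroot_eq x y hxy
  -- walk from root x to x
  obtain ⟨p0, hp0⟩ := hroot_reach x
  have hrx : WalkFT Adj (root x) x p0 := walk_symm hs hp0
  obtain ⟨q0, hq0⟩ := hroot_reach y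
  have hry : WalkFT Adj (root x) y q0 := by rw [hre]; exact walk_symm hs hq0
  by_cases hCx : ∃ p, Odd p ∧ WalkFT Adj (root x) x p
  · by_cases hCy : ∃ p, Odd p ∧ WalkFT Adj (root y) y p
    · obtain ⟨p, hp, hwp⟩ := hCx
      obtain ⟨q, hq, hwq⟩ := hCy
      rw [← hre] at hwq
      have hW : WalkFT Adj (root x) y (p + 1) := walk_trans hwp (walk_single hxy)
      have := hpar _ _ _ _ hW hwq
      rw [Nat.odd_iff] at hp hq
      omega
    · simp [hCx, hCy] at heq
  · by_cases hCy : ∃ p, Odd p ∧ WalkFT Adj (root y) y p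
    · simp [hCx, hCy] at heq
    · -- p0 must be even, then root x → y has odd length p0+1
      have hp0e : p0 % 2 = 0 := by
        by_contra hodd
        exact hCx ⟨p0, Nat.odd_iff.mpr (by omega), hrx⟩
      apply hCy
      rw [← hre]
      exact ⟨p0 + 1, Nat.odd_iff.mpr (by omega), walk_trans hrx (walk_single hxy)⟩

lemma main {r N : ℕ} (col : Fin N → Fin N → Fin r) (hc : ∀ u v, col u v = col v u) :
    ∀ k, k ≤ r → ∀ S : Finset (Fin N), S.card = 2 ^ k + 1 →
      (∀ u v, u ∈ S → v ∈ S → u ≠ v → (col u v).val < k) →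
      ∃ i : Fin r, ∃ m, Odd m ∧ m ≤ 2 ^ (i.val + 1) + 1 ∧
        ∃ u, WalkFT (fun a b => a ≠ b ∧ col a b = i) u u m := by
  intro k
  induction k with
  | zero =>
    intro _ S hcard hcol
    have h2 : 1 < S.card := by rw [hcard, pow_zero]; omega
    obtain ⟨u, hu, v, hv, huv⟩ := Finset.one_lt_card.mp h2
    exact absurd (hcol u v hu hv huv) (by omega)
  | succ k ih =>
    intro hkr S hcard hcol
    classical
    set i0 : Fin r := ⟨k, by omega⟩ with hi0
    by_cases hcase : ∃ m, Odd m ∧ ∃ u,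
        WalkFT (fun a b => a ≠ b ∧ a ∈ S ∧ b ∈ S ∧ col a b = i0) u u m
    · obtain ⟨m, hoddm, hle, u, hw⟩ := shorten (S := S) (fun a b hab => hab.2.1) hcase
      refine ⟨i0, m, hoddm, ?_, u, walk_mono (fun a b hab => ⟨hab.1, hab.2.2.2⟩) hw⟩
      rw [hcard] at hle
      simpa using hle
    · have hsymmS : ∀ a b : Fin N, (a ≠ b ∧ a ∈ S ∧ b ∈ S ∧ col a b = i0) →
          (b ≠ a ∧ b ∈ S ∧ a ∈ S ∧ col b a = i0) :=
        fun a b hab => ⟨hab.1.symm, hab.2.2.1, hab.2.1, (hc b a).trans hab.2.2.2⟩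
      obtain ⟨g, hg⟩ := two_color hsymmS hcase
      have hsplit := Finset.card_filter_add_card_filter_not
        (s := S) (p := fun v => g v = true)
      simp only [Bool.not_eq_true] at hsplit
      have hbig : ∃ c : Bool, 2 ^ k + 1 ≤ (S.filter (fun v => g v = c)).card := by
        by_contra hno
        push_neg at hno
        have h1 := hno true
        have h2 := hno false
        omega
      obtain ⟨c, hcge⟩ := hbig
      obtain ⟨T, hTsub, hTcard⟩ := Finset.exists_subset_card_eq hcge
      have hTS : T ⊆ S := hTsub.trans (Finset.filter_subset _ _)
      refine ih (by omega) T hTcard ?_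
      intro u v hu hv huv
      have h1 : (col u v).val < k + 1 := hcol u v (hTS hu) (hTS hv) huv
      by_contra hge
      push_neg at hge
      have hcolval : (col u v).val = k := by omega
      have hcoli0 : col u v = i0 := Fin.ext hcolval
      have hadj : u ≠ v ∧ u ∈ S ∧ v ∈ S ∧ col u v = i0 :=
        ⟨huv, hTS hu, hTS hv, hcoli0⟩
      have := hg u v hadj
      have hgu := (Finset.mem_filter.mp (hTsub hu)).2
      have hgv := (Finset.mem_filter.mp (hTsub hv)).2
      rw [hgu, hgv] at this
      exact this rfl

lemma pad {V : Type*} {Adj : V → V → Prop} (hs : ∀ a b, Adj a b → Adj b a)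
    {u : V} {m L : ℕ} (h : WalkFT Adj u u m) (hmpos : 0 < m)
    (hpar : m % 2 = L % 2) (hml : m ≤ L) : WalkFT Adj u u L := by
  obtain ⟨w, h0, hm, ha⟩ := h
  have hadj01 : Adj (w 0) (w 1) := ha 0 hmpos
  refine ⟨fun k => if k < L - m then (if k % 2 = 0 then w 0 else w 1)
    else w (k - (L - m)), ?_, ?_, ?_⟩
  · by_cases h1 : 0 < L - m
    · simp [h1, h0]
    · have : ¬ (0 < L - m) := h1
      simp only [if_neg (by omega : ¬ (0 : ℕ) < L - m)]
      rw [Nat.zero_sub, h0]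
  · have hnl : ¬ (L < L - m) := by omega
    simp only [if_neg hnl]
    rw [show L - (L - m) = m from by omega, hm]
  · intro k hk
    by_cases hb : k + 1 < L - m
    · have hkb : k < L - m := by omega
      simp only [if_pos hkb, if_pos hb]
      by_cases hk2 : k % 2 = 0
      · have hk12 : ¬ ((k + 1) % 2 = 0) := by omega
        simp only [if_pos hk2, if_neg hk12]
        exact hadj01
      · have hk12 : (k + 1) % 2 = 0 := by omega
        simp only [if_neg hk2, if_pos hk12]
        exact hs _ _ hadj01
    · by_cases hkb : k < L - m
      · have he : k + 1 = L - m := by omega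
        have hLm : (L - m) % 2 = 0 := by omega
        have hk2 : ¬ (k % 2 = 0) := by omega
        simp only [if_pos hkb, if_neg (show ¬ k + 1 < L - m by omega), if_neg hk2]
        rw [show k + 1 - (L - m) = 0 from by omega]
        exact hs _ _ hadj01
      · simp only [if_neg hkb, if_neg hb]
        rw [show k + 1 - (L - m) = (k - (L - m)) + 1 from by omega]
        exact ha _ (by omega)


lemma cycle_adj_consec {L : ℕ} (hL : 3 ≤ L) {k : ℕ} (hk : k + 1 < L) :
    (cyclePower L 1).Adj ⟨k, by omega⟩ ⟨k + 1, hk⟩ := by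
  refine ⟨Fin.ne_of_val_ne (by simp), ?_⟩
  show min (Nat.dist k (k + 1)) (L - Nat.dist k (k + 1)) ≤ 1
  have : Nat.dist k (k + 1) = 1 := by simp [Nat.dist]
  rw [this]
  simp

lemma cycle_adj_wrap {L : ℕ} (hL : 3 ≤ L) :
    (cyclePower L 1).Adj ⟨L - 1, by omega⟩ ⟨0, by omega⟩ := by
  refine ⟨Fin.ne_of_val_ne (by simp; omega), ?_⟩
  show min (Nat.dist (L - 1) 0) (L - Nat.dist (L - 1) 0) ≤ 1
  have : Nat.dist (L - 1) 0 = L - 1 := by simp [Nat.dist]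
  rw [this]
  omega

lemma no_odd_cycle_two_color {L : ℕ} (hoddL : Odd L) (hL : 3 ≤ L) (g : Fin L → Bool)
    (hg : ∀ x y : Fin L, (cyclePower L 1).Adj x y → g x ≠ g y) : False := by
  have hstep : ∀ k (hk : k + 1 < L), g ⟨k + 1, hk⟩ = ! g ⟨k, by omega⟩ := by
    intro k hk
    have hne := hg _ _ (cycle_adj_consec hL hk)
    cases h1 : g ⟨k, by omega⟩ <;> cases h2 : g ⟨k + 1, hk⟩ <;> simp_all
  have hmain : ∀ k (hk : k < L),
      g ⟨k, hk⟩ = (if k % 2 = 0 then g ⟨0, by omega⟩ else ! g ⟨0, by omega⟩) := by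
    intro k
    induction k with
    | zero => intro hk; simp
    | succ n ihn =>
      intro hk
      rw [hstep n hk, ihn (by omega)]
      by_cases h2 : n % 2 = 0
      · rw [if_pos h2, if_neg (by omega : ¬ (n + 1) % 2 = 0)]
      · rw [if_neg h2, if_pos (by omega : (n + 1) % 2 = 0), Bool.not_not]
  have hne := hg _ _ (cycle_adj_wrap hL)
  have heq := hmain (L - 1) (by omega)
  have hev : (L - 1) % 2 = 0 := by
    rw [Nat.odd_iff] at hoddL; omega
  rw [if_pos hev] at heq
  exact hne heq

lemma hom_of_walk {N r : ℕ} {col : Fin N → Fin N → Fin r} (hc : ∀ u v, col u v = col v u)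
    {i : Fin r} {u : Fin N} {L : ℕ}
    (hL : 3 ≤ L) (h : WalkFT (fun a b => a ≠ b ∧ col a b = i) u u L) :
    HomTo (cyclePower L 1) (SimpleGraph.fromRel fun u v => col u v = i) := by
  obtain ⟨w, h0, hL', ha⟩ := h
  refine ⟨fun k => w k.val, ?_⟩
  intro x y hxy
  obtain ⟨hne, hdist⟩ := hxy
  rw [SimpleGraph.fromRel_adj]
  have hx := x.isLt
  have hy := y.isLt
  have hvne : x.val ≠ y.val := fun hh => hne (Fin.ext hh)
  have hdist' : min (x.val - y.val + (y.val - x.val))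
      (L - (x.val - y.val + (y.val - x.val))) ≤ 1 := by
    simpa [Nat.dist] using hdist
  rw [min_le_iff] at hdist'
  have hcases : y.val = x.val + 1 ∨ x.val = y.val + 1 ∨
      (x.val = 0 ∧ y.val = L - 1) ∨ (y.val = 0 ∧ x.val = L - 1) := by omega
  have hwL0 : w L = w 0 := hL'.trans h0.symm
  rcases hcases with h1 | h1 | ⟨h1, h2⟩ | ⟨h1, h2⟩
  · have hh := ha x.val (by omega)
    rw [show x.val + 1 = y.val from h1.symm] at hh
    exact ⟨hh.1, Or.inl hh.2⟩
  · have hh := ha y.val (by omega)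
    rw [show y.val + 1 = x.val from h1.symm] at hh
    exact ⟨hh.1.symm, Or.inr hh.2⟩
  · have hh := ha (L - 1) (by omega)
    rw [show L - 1 + 1 = L from by omega, hwL0] at hh
    simp only [h1, h2]
    exact ⟨hh.1.symm, Or.inr hh.2⟩
  · have hh := ha (L - 1) (by omega)
    rw [show L - 1 + 1 = L from by omega, hwL0] at hh
    simp only [h1, h2]
    exact ⟨hh.1, Or.inl hh.2⟩

def bitColor (r : ℕ) (hr : 1 ≤ r) (x : ℕ) : Fin r :=
  if h : ((Finset.range r).filter fun j => x.testBit j).Nonempty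
  then ⟨((Finset.range r).filter fun j => x.testBit j).max' h, by
    have hm := Finset.max'_mem ((Finset.range r).filter fun j => x.testBit j) h
    simp only [Finset.mem_filter, Finset.mem_range] at hm
    exact hm.1⟩
  else ⟨0, hr⟩

lemma bitColor_testBit {r : ℕ} (hr : 1 ≤ r) {x : ℕ} (h0 : x ≠ 0) (hx : x < 2 ^ r) :
    x.testBit ((bitColor r hr x).val) = true := by
  classical
  obtain ⟨j, hj⟩ : ∃ j, x.testBit j = true := by
    by_contra hall
    push_neg at hall
    apply h0
    apply Nat.eq_of_testBit_eq
    intro j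
    rw [Nat.zero_testBit]
    exact Bool.eq_false_iff.mpr (hall j)
  have hjr : j < r := by
    by_contra hge
    push_neg at hge
    have hlt : x < 2 ^ j := lt_of_lt_of_le hx (Nat.pow_le_pow_right (by norm_num) hge)
    rw [Nat.testBit_lt_two_pow hlt] at hj
    exact Bool.false_ne_true hj
  have hne : ((Finset.range r).filter fun j => x.testBit j).Nonempty :=
    ⟨j, by simp only [Finset.mem_filter, Finset.mem_range]; exact ⟨hjr, hj⟩⟩
  rw [bitColor, dif_pos hne]
  have hm := Finset.max'_mem ((Finset.range r).filter fun j => x.testBit j) hne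
  simp only [Finset.mem_filter] at hm
  exact hm.2

end HomRamseyAux

/-- `R_hom(C_{ℓ_1},…,C_{ℓ_r}) = 2^r + 1` for odd cycles with `ℓ_s > 2^s`. -/
theorem hom_ramsey_odd_cycles (r : ℕ) (hr : 1 ≤ r) (ℓ : Fin r → ℕ)
    (hodd : ∀ s, Odd (ℓ s)) (hbig : ∀ s : Fin r, 2 ^ (s.val + 1) < ℓ s) :
    (∀ col : Fin (2^r + 1) → Fin (2^r + 1) → Fin r,
      (∀ u v, col u v = col v u) →
      ∃ i, HomTo (cyclePower (ℓ i) 1) (SimpleGraph.fromRel fun u v => col u v = i)) ∧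
    (∃ col : Fin (2^r) → Fin (2^r) → Fin r,
      (∀ u v, col u v = col v u) ∧
      ∀ i, ¬ HomTo (cyclePower (ℓ i) 1) (SimpleGraph.fromRel fun u v => col u v = i)) := by
  constructor
  · intro col hc
    have hcard : (Finset.univ : Finset (Fin (2 ^ r + 1))).card = 2 ^ r + 1 := by simp
    obtain ⟨i, m, hoddm, hle, u, hw⟩ := HomRamseyAux.main col hc r le_rfl Finset.univ hcard
      (fun u v _ _ _ => (col u v).isLt)
    have h2le : (2 : ℕ) ≤ 2 ^ (i.val + 1) := by
      calc (2 : ℕ) = 2 ^ 1 := by norm_num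
        _ ≤ 2 ^ (i.val + 1) := Nat.pow_le_pow_right (by norm_num) (by omega)
    have hL3 : 3 ≤ ℓ i := by have := hbig i; omega
    have hml : m ≤ ℓ i := by have := hbig i; omega
    have hsym : ∀ a b : Fin (2 ^ r + 1), (a ≠ b ∧ col a b = i) → (b ≠ a ∧ col b a = i) :=
      fun a b h => ⟨h.1.symm, (hc b a).trans h.2⟩
    have hpar : m % 2 = ℓ i % 2 := by
      have h1 := hodd i
      rw [Nat.odd_iff] at h1
      rw [Nat.odd_iff] at hoddm
      omega
    have hwL : HomRamseyAux.WalkFT (fun a b => a ≠ b ∧ col a b = i) u u (ℓ i) :=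
      HomRamseyAux.pad hsym hw hoddm.pos hpar hml
    exact ⟨i, HomRamseyAux.hom_of_walk hc hL3 hwL⟩
  · refine ⟨fun u v => HomRamseyAux.bitColor r hr (u.val ^^^ v.val), ?_, ?_⟩
    · intro u v
      show HomRamseyAux.bitColor r hr (u.val ^^^ v.val)
        = HomRamseyAux.bitColor r hr (v.val ^^^ u.val)
      rw [Nat.xor_comm]
    · intro i hhom
      obtain ⟨f, hf⟩ := hhom
      have h2le : (2 : ℕ) ≤ 2 ^ (i.val + 1) := by
        calc (2 : ℕ) = 2 ^ 1 := by norm_num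
          _ ≤ 2 ^ (i.val + 1) := Nat.pow_le_pow_right (by norm_num) (by omega)
      have hL3 : 3 ≤ ℓ i := by have := hbig i; omega
      apply HomRamseyAux.no_odd_cycle_two_color (hodd i) hL3
        (fun k => ((f k).val).testBit i.val)
      intro x y hxy
      have hadj := hf x y hxy
      rw [SimpleGraph.fromRel_adj] at hadj
      obtain ⟨hne, hcor⟩ := hadj
      have hcol : HomRamseyAux.bitColor r hr ((f x).val ^^^ (f y).val) = i := by
        rcases hcor with h | h
        · exact h
        · rw [Nat.xor_comm]; exact h
      have hxor0 : (f x).val ^^^ (f y).val ≠ 0 := by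
        rw [Ne, xor_eq_zero_iff]
        intro hh
        exact hne (Fin.ext hh)
      have hxorlt : (f x).val ^^^ (f y).val < 2 ^ r :=
        Nat.xor_lt_two_pow (f x).isLt (f y).isLt
      have hbit := HomRamseyAux.bitColor_testBit hr hxor0 hxorlt
      rw [hcol, Nat.testBit_xor] at hbit
      intro heq
      rw [heq] at hbit
      simp at hbit
end

section
/- Let r ≥ 2 and suppose the edges of K_{2^r+1} are coloured with r colours. Then for some colour i, the subgraph of edges of colour i contains an odd cycle of length at most 2^i + 1. -/
open SimpleGraph Finset

namespace ShortOddAux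

open SimpleGraph Walk

variable {V : Type*} {G : SimpleGraph V}

/-- If a walk's support has a duplicate, split off a nontrivial closed walk. -/
lemma decomp_of_not_nodup {u v : V} (p : G.Walk u v) (h : ¬ p.support.Nodup) :
    ∃ (z : V) (c : G.Walk z z) (q : G.Walk u v),
      0 < c.length ∧ c.length + q.length = p.length := by
  classical
  obtain ⟨z, hz⟩ : ∃ z, ¬ (p.support.count z ≤ 1) := by
    by_contra h'
    push_neg at h'
    exact h (List.nodup_iff_count_le_one.mpr fun z => h' z)
  have hz2 : 2 ≤ p.support.count z := by omega
  have hzmem : z ∈ p.support := by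
    have : 0 < p.support.count z := by omega
    exact List.count_pos_iff.mp this
  have hspec : (p.takeUntil z hzmem).append (p.dropUntil z hzmem) = p := p.take_spec hzmem
  have hcount1 : (p.takeUntil z hzmem).support.count z = 1 :=
    p.count_support_takeUntil_eq_one hzmem
  have hsup : p.support
      = (p.takeUntil z hzmem).support ++ (p.dropUntil z hzmem).support.tail := by
    conv_lhs => rw [← hspec]
    exact support_append _ _
  have hzd : z ∈ (p.dropUntil z hzmem).support.tail := by
    have h2 := hz2
    rw [hsup, List.count_append, hcount1] at h2
    have : 0 < ((p.dropUntil z hzmem).support.tail).count z := by omega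
    exact List.count_pos_iff.mp this
  have hdnil : ¬ (p.dropUntil z hzmem).Nil := by
    rw [not_nil_iff_lt_length]
    have h3 := (p.dropUntil z hzmem).length_support
    have h4 : 0 < (p.dropUntil z hzmem).support.tail.length :=
      List.length_pos_iff.mpr (List.ne_nil_of_mem hzd)
    rw [List.length_tail] at h4
    omega
  obtain ⟨w, hadj, d', hd⟩ := not_nil_iff.mp hdnil
  have hzd' : z ∈ d'.support := by
    rw [hd] at hzd
    simpa using hzd
  refine ⟨z, Walk.cons hadj (d'.takeUntil z hzd'), (p.takeUntil z hzmem).append (d'.dropUntil z hzd'), ?_, ?_⟩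
  · simp
  · have h1 : (d'.takeUntil z hzd').length + (d'.dropUntil z hzd').length = d'.length := by
      conv_rhs => rw [← d'.take_spec hzd']
      rw [length_append]
    have h2 : (p.takeUntil z hzmem).length + (d'.length + 1) = p.length := by
      conv_rhs => rw [← hspec]
      rw [length_append, hd, length_cons]
    simp only [length_cons, length_append]
    omega

/-- A path ending at `x`, starting at `y`, containing edge `s(x,y)` has length 1. -/
lemma length_eq_one_of_mem_edges :
    ∀ {y x : V} (p : G.Walk y x), p.support.Nodup → s(x, y) ∈ p.edges → p.length = 1 := by
  intro y x p
  induction p with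
  | nil => simp
  | @cons y z x h q ih =>
    intro hnd he
    rw [support_cons, List.nodup_cons] at hnd
    rw [edges_cons, List.mem_cons] at he
    rcases he with he | he
    · rw [Sym2.eq_iff] at he
      rcases he with ⟨rfl, rfl⟩ | ⟨rfl, -⟩
      · exact absurd rfl h.ne
      · have : q.IsPath := (isPath_def q).mpr hnd.2
        have : q = Walk.nil := (isPath_iff_eq_nil (p := q)).mp this
        subst this
        simp
    · exact absurd (q.snd_mem_support_of_mem_edges he) hnd.1

/-- An odd closed walk contains an odd cycle of no greater length. -/
lemma exists_odd_cycle : ∀ (n : ℕ) {x : V} (w : G.Walk x x), w.length = n → Odd n →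
    ∃ (z : V) (c : G.Walk z z), c.IsCycle ∧ Odd c.length ∧ c.length ≤ n := by
  intro n
  induction n using Nat.strong_induction_on with
  | _ n IH =>
    intro x w hlen hodd
    have hpos : 0 < n := hodd.pos
    have hwnil : ¬ w.Nil := by
      rw [not_nil_iff_lt_length, hlen]; exact hpos
    obtain ⟨y, h, p, rfl⟩ := not_nil_iff.mp hwnil
    rw [length_cons] at hlen
    by_cases hnd : p.support.Nodup
    · by_cases he : s(x, y) ∈ p.edges
      · have h1 := length_eq_one_of_mem_edges p hnd he
        rcases hodd with ⟨m, hm⟩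
        omega
      · refine ⟨x, Walk.cons h p, ?_, ?_, ?_⟩
        · exact (cons_isCycle_iff p h).mpr ⟨(isPath_def p).mpr hnd, he⟩
        · rw [length_cons, hlen]; exact hodd
        · rw [length_cons, hlen]
    · obtain ⟨z, c, q, hc0, hcq⟩ := decomp_of_not_nodup p hnd
      by_cases hco : Odd c.length
      · obtain ⟨z', c', hc', ho', hle'⟩ := IH c.length (by omega) c rfl hco
        exact ⟨z', c', hc', ho', by omega⟩
      · have hqo : Odd (Walk.cons h q).length := by
          rw [length_cons]
          rcases Nat.even_or_odd c.length with hev | hodd'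
          · rcases hev with ⟨k, hk⟩
            rcases hodd with ⟨m, hm⟩
            exact ⟨m - k, by omega⟩
          · exact absurd hodd' hco
        obtain ⟨z', c', hc', ho', hle'⟩ := IH (Walk.cons h q).length
          (by rw [length_cons]; omega) (Walk.cons h q) rfl hqo
        exact ⟨z', c', hc', ho', by rw [length_cons] at hle'; omega⟩


section Bipartite

/-- If a graph has no odd closed walks, it has a proper 2-colouring. -/
lemma exists_bool_coloring (G : SimpleGraph V)
    (h : ∀ (x : V) (w : G.Walk x x), ¬ Odd w.length) :
    ∃ c : V → Bool, ∀ u v, G.Adj u v → c u ≠ c v := by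
  classical
  refine ⟨fun v => decide (∃ w : G.Walk (G.connectedComponentMk v).out v, Odd w.length), ?_⟩
  intro u v hadj huv
  simp only [decide_eq_decide] at huv
  have hcomp : G.connectedComponentMk u = G.connectedComponentMk v :=
    ConnectedComponent.sound hadj.reachable
  have hx : (G.connectedComponentMk u).out = (G.connectedComponentMk v).out := by rw [hcomp]
  rw [hx] at huv
  have hru : G.Reachable (G.connectedComponentMk u).out u :=
    ConnectedComponent.exact (Quot.out_eq _)
  have hrv : G.Reachable (G.connectedComponentMk v).out v :=
    ConnectedComponent.exact (Quot.out_eq _)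
  rw [hx] at hru
  obtain ⟨a⟩ := hru
  obtain ⟨b⟩ := hrv
  have hab : ¬ Odd ((a.append (Walk.cons hadj b.reverse)).length) := h _ _
  rw [Walk.length_append, Walk.length_cons, Walk.length_reverse] at hab
  rw [Nat.not_odd_iff_even] at hab
  rcases Nat.even_or_odd a.length with hae | hao
  · -- a even, so b odd
    have hbo : Odd b.length := by
      rcases hae with ⟨k, hk⟩
      rcases Nat.even_or_odd b.length with ⟨l, hl⟩ | hbo
      · exfalso; rcases hab with ⟨m, hm⟩; omega
      · exact hbo
    obtain ⟨a', hao'⟩ := huv.mpr ⟨b, hbo⟩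
    have := h _ (a'.append a.reverse)
    rw [Walk.length_append, Walk.length_reverse, Nat.not_odd_iff_even] at this
    rcases hao' with ⟨m, hm⟩
    rcases hae with ⟨k, hk⟩
    rcases this with ⟨l, hl⟩
    omega
  · -- a odd, so b even
    obtain ⟨b', hbo'⟩ := huv.mp ⟨a, hao⟩
    have := h _ (b'.append b.reverse)
    rw [Walk.length_append, Walk.length_reverse, Nat.not_odd_iff_even] at this
    rcases hao with ⟨k, hk⟩
    rcases hbo' with ⟨m, hm⟩
    rcases hab with ⟨j, hj⟩
    rcases this with ⟨l, hl⟩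
    omega

end Bipartite


section Key

lemma key (r : ℕ) (hr : 1 ≤ r) (s : Finset V) (col : V → V → ℕ)
    (hcol : ∀ u ∈ s, ∀ v ∈ s, u ≠ v → col u v < r) (hcard : s.card = 2 ^ r + 1) :
    ∃ i < r, ∃ (x : V)
      (w : (SimpleGraph.fromRel fun u v => col u v = i ∧ u ∈ s ∧ v ∈ s).Walk x x),
      w.IsCycle ∧ Odd w.length ∧ w.length ≤ 2 ^ (i + 1) + 1 := by
  classical
  induction r, hr using Nat.le_induction generalizing s with
  | base =>
    rw [pow_one] at hcard
    obtain ⟨a, b, c, hab, hac, hbc, rfl⟩ := Finset.card_eq_three.mp hcard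
    have ha : a ∈ ({a, b, c} : Finset V) := by simp
    have hb : b ∈ ({a, b, c} : Finset V) := by simp
    have hc : c ∈ ({a, b, c} : Finset V) := by simp
    have hcol0 : ∀ u ∈ ({a, b, c} : Finset V), ∀ v ∈ ({a, b, c} : Finset V), u ≠ v →
        col u v = 0 := by
      intro u hu v hv hne
      have := hcol u hu v hv hne
      omega
    set G := SimpleGraph.fromRel
      (fun u v => col u v = 0 ∧ u ∈ ({a, b, c} : Finset V) ∧ v ∈ ({a, b, c} : Finset V)) with hG
    have hadj : ∀ u ∈ ({a, b, c} : Finset V), ∀ v ∈ ({a, b, c} : Finset V), u ≠ v →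
        G.Adj u v := by
      intro u hu v hv hne
      rw [hG, SimpleGraph.fromRel_adj]
      exact ⟨hne, Or.inl ⟨hcol0 u hu v hv hne, hu, hv⟩⟩
    have h1 : G.Adj a b := hadj a ha b hb hab
    have h2 : G.Adj b c := hadj b hb c hc hbc
    have h3 : G.Adj c a := hadj c hc a ha (Ne.symm hac)
    refine ⟨0, by omega, a,
      Walk.cons h1 (Walk.cons h2 (Walk.cons h3 Walk.nil)), ?_, ?_, ?_⟩
    · rw [Walk.cons_isCycle_iff]
      constructor
      · rw [Walk.isPath_def]
        simp [hab, hac, hbc, Ne.symm hab, Ne.symm hac, Ne.symm hbc]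
      · simp only [Walk.edges_cons, Walk.edges_nil, List.mem_cons, List.not_mem_nil,
          or_false, Sym2.eq_iff]
        push_neg
        refine ⟨⟨fun h => ?_, fun h => ?_⟩, ⟨fun h => ?_, fun h => ?_⟩⟩ <;> simp_all
    · simp only [Walk.length_cons, Walk.length_nil]
      decide
    · simp only [Walk.length_cons, Walk.length_nil]
      omega
  | succ r hr IH =>
    by_cases hodd : ∃ (x : V) (w : (SimpleGraph.fromRel
        (fun u v => col u v = (r : ℕ) ∧ u ∈ s ∧ v ∈ s)).Walk x x), Odd w.length
    · obtain ⟨x, w, hw⟩ := hodd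
      obtain ⟨z, c, hcyc, hodd', -⟩ := exists_odd_cycle w.length w rfl hw
      refine ⟨r, by omega, z, c, hcyc, hodd', ?_⟩
      have hsub : ∀ a ∈ c.support.tail, a ∈ s := by
        intro a haa
        rw [← Walk.map_snd_darts, List.mem_map] at haa
        obtain ⟨d, hd, rfl⟩ := haa
        rcases ((SimpleGraph.fromRel_adj _ _ _).mp d.adj).2 with ⟨-, -, h2⟩ | ⟨-, h2, -⟩ <;>
          exact h2
      have hnd : c.support.tail.Nodup := ((Walk.isCycle_def c).mp hcyc).2.2
      have hlen : c.support.tail.length ≤ s.card := by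
        have hsub' : c.support.tail.toFinset ⊆ s := by
          intro a haa
          exact hsub a (List.mem_toFinset.mp haa)
        calc c.support.tail.length = c.support.tail.toFinset.card :=
              (List.toFinset_card_of_nodup hnd).symm
          _ ≤ s.card := Finset.card_le_card hsub'
      have hls : c.support.tail.length = c.length := by
        rw [List.length_tail, Walk.length_support]
        omega
      omega
    · push_neg at hodd
      obtain ⟨c2, hc2⟩ := exists_bool_coloring _ hodd
      have hsplit := Finset.card_filter_add_card_filter_not
        (s := s) (p := fun v => c2 v = true)
      have hpow : 2 ^ (r + 1) = 2 ^ r + 2 ^ r := by ring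
      have hbig : 2 ^ r + 1 ≤ (s.filter (fun v => c2 v = true)).card ∨
          2 ^ r + 1 ≤ (s.filter (fun v => ¬ (c2 v = true))).card := by
        rw [hcard] at hsplit; omega
      have main : ∀ t0 : Finset V, t0 ⊆ s → (∀ u ∈ t0, ∀ v ∈ t0, c2 u = c2 v) →
          2 ^ r + 1 ≤ t0.card →
          ∃ i < r + 1, ∃ (x : V)
            (w : (SimpleGraph.fromRel fun u v => col u v = i ∧ u ∈ s ∧ v ∈ s).Walk x x),
            w.IsCycle ∧ Odd w.length ∧ w.length ≤ 2 ^ (i + 1) + 1 := by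
        intro t0 ht0s hsame hble
        obtain ⟨t', ht'sub, ht'card⟩ := Finset.exists_subset_card_eq (s := t0) (n := 2 ^ r + 1) hble
        have ht's : t' ⊆ s := ht'sub.trans ht0s
        have hcol' : ∀ u ∈ t', ∀ v ∈ t', u ≠ v → col u v < r := by
          intro u hu v hv hne
          have hlt := hcol u (ht's hu) v (ht's hv) hne
          rcases Nat.lt_succ_iff_lt_or_eq.mp hlt with h | h
          · exact h
          · exfalso
            have hadj : (SimpleGraph.fromRel
                (fun u v => col u v = (r : ℕ) ∧ u ∈ s ∧ v ∈ s)).Adj u v := by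
              rw [SimpleGraph.fromRel_adj]
              exact ⟨hne, Or.inl ⟨h, ht's hu, ht's hv⟩⟩
            exact hc2 u v hadj (by rw [hsame u (ht'sub hu) v (ht'sub hv)])
        obtain ⟨i, hi, x, w, hcyc, hoddw, hlenw⟩ := IH t' hcol' ht'card
        have hle : (SimpleGraph.fromRel fun u v => col u v = i ∧ u ∈ t' ∧ v ∈ t') ≤
            (SimpleGraph.fromRel fun u v => col u v = i ∧ u ∈ s ∧ v ∈ s) := by
          intro a b hab
          rw [SimpleGraph.fromRel_adj] at hab ⊢
          refine ⟨hab.1, hab.2.imp ?_ ?_⟩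
          · rintro ⟨x1, x2, x3⟩; exact ⟨x1, ht's x2, ht's x3⟩
          · rintro ⟨x1, x2, x3⟩; exact ⟨x1, ht's x2, ht's x3⟩
        refine ⟨i, by omega, x, w.mapLe hle, hcyc.mapLe hle, ?_, ?_⟩
        · rw [Walk.length_map]; exact hoddw
        · rw [Walk.length_map]; exact hlenw
      rcases hbig with hb1 | hb1
      · refine main _ (Finset.filter_subset _ _) ?_ hb1
        intro u hu v hv
        rw [Finset.mem_filter] at hu hv
        rw [hu.2, hv.2]
      · refine main _ (Finset.filter_subset _ _) ?_ hb1
        intro u hu v hv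
        rw [Finset.mem_filter] at hu hv
        simp only [Bool.not_eq_true] at hu hv
        rw [hu.2, hv.2]

end Key

end ShortOddAux

/-- In any `r`-colouring of `K_{2^r+1}`, some colour `i` contains an odd cycle of length
at most `2^i + 1` (colours indexed `1,…,r`; here `i : Fin r` corresponds to colour `i+1`). -/
theorem short_odd_cycle_in_colouring (r : ℕ) (hr : 2 ≤ r)
    (col : Fin (2^r + 1) → Fin (2^r + 1) → Fin r)
    (hsym : ∀ u v, col u v = col v u) :
    ∃ (i : Fin r) (x : Fin (2^r + 1))
      (w : (SimpleGraph.fromRel fun u v => col u v = i).Walk x x),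
      w.IsCycle ∧ Odd w.length ∧ w.length ≤ 2 ^ (i.val + 1) + 1 := by
  classical
  have hcard : (Finset.univ : Finset (Fin (2 ^ r + 1))).card = 2 ^ r + 1 := by simp
  obtain ⟨i, hi, x, w, hcyc, hodd, hlen⟩ := ShortOddAux.key r (by omega) Finset.univ
    (fun u v => ((col u v : Fin r) : ℕ))
    (fun u _ v _ _ => (col u v).isLt) hcard
  have hle : (SimpleGraph.fromRel fun u v =>
        ((col u v : Fin r) : ℕ) = i ∧ u ∈ Finset.univ ∧ v ∈ Finset.univ) ≤
      (SimpleGraph.fromRel fun u v => col u v = (⟨i, hi⟩ : Fin r)) := by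
    intro a b hab
    rw [SimpleGraph.fromRel_adj] at hab ⊢
    refine ⟨hab.1, hab.2.imp ?_ ?_⟩
    · rintro ⟨h1, -, -⟩; exact Fin.ext h1
    · rintro ⟨h1, -, -⟩; exact Fin.ext h1
  refine ⟨⟨i, hi⟩, x, w.mapLe hle, hcyc.mapLe hle, ?_, ?_⟩
  · rw [Walk.length_map]; exact hodd
  · rw [Walk.length_map]; exact hlen
end
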